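/- arXiv:2411.03155 — 5 statements merged into one kernel-verified Lean document; each statement's English description precedes it below -/
import Mathlib

section
/- If G is a nontrivial finite abelian group that is not cyclic, then its Schur multiplier (the second homology group H_2(G, ℤ) with trivial action) is nontrivial. -/
/-- The natural projection from the free group on the underlying set of `G` onto `G`. -/
def presProj (G : Type*) [Group G] : FreeGroup G →* G := FreeGroup.lift id

/-- The relation subgroup `R` of the free presentation `1 → R → F → G → 1`. -/
def relSub (G : Type*) [Group G] : Subgroup (FreeGroup G) := (presProj G).ker

/-- The numerator `R ⊓ [F, F]` in Hopf's formula. -/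
def hopfTop (G : Type*) [Group G] : Subgroup (FreeGroup G) :=
  relSub G ⊓ commutator (FreeGroup G)

/-- The denominator `[F, R]` in Hopf's formula, viewed inside `R ⊓ [F, F]`. -/
def hopfBot (G : Type*) [Group G] : Subgroup (hopfTop G) :=
  (⁅(⊤ : Subgroup (FreeGroup G)), relSub G⁆).subgroupOf (hopfTop G)

instance relSub_normal (G : Type*) [Group G] : (relSub G).Normal :=
  MonoidHom.normal_ker _

instance hopfBot_normal (G : Type*) [Group G] : (hopfBot G).Normal :=
  Subgroup.normal_subgroupOf

/-- The Schur multiplier `M(G) = H₂(G, ℤ)` of `G`, via Hopf's formula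
`M(G) = (R ⊓ [F, F]) / [F, R]` for a free presentation `G = F/R`. -/
def SchurMultiplier (G : Type*) [Group G] : Type _ := hopfTop G ⧸ hopfBot G

noncomputable instance (G : Type*) [Group G] : Group (SchurMultiplier G) :=
  inferInstanceAs (Group (hopfTop G ⧸ hopfBot G))

open scoped commutatorElement

/-! ### Auxiliary: the Heisenberg group over `ZMod p` -/

/-- The Heisenberg group over `ZMod p`. -/
@[ext] structure Heis (p : ℕ) where
  a : ZMod p
  b : ZMod p
  c : ZMod p

namespace Heis
variable {p : ℕ}

instance : Mul (Heis p) := ⟨fun x y => ⟨x.a + y.a, x.b + y.b, x.c + y.c + x.a * y.b⟩⟩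
instance : One (Heis p) := ⟨⟨0, 0, 0⟩⟩
instance : Inv (Heis p) := ⟨fun x => ⟨-x.a, -x.b, -x.c + x.a * x.b⟩⟩

@[simp] lemma mul_a (x y : Heis p) : (x * y).a = x.a + y.a := rfl
@[simp] lemma mul_b (x y : Heis p) : (x * y).b = x.b + y.b := rfl
@[simp] lemma mul_c (x y : Heis p) : (x * y).c = x.c + y.c + x.a * y.b := rfl
@[simp] lemma one_a : (1 : Heis p).a = 0 := rfl
@[simp] lemma one_b : (1 : Heis p).b = 0 := rfl
@[simp] lemma one_c : (1 : Heis p).c = 0 := rfl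
@[simp] lemma inv_a (x : Heis p) : (x⁻¹).a = -x.a := rfl
@[simp] lemma inv_b (x : Heis p) : (x⁻¹).b = -x.b := rfl
@[simp] lemma inv_c (x : Heis p) : (x⁻¹).c = -x.c + x.a * x.b := rfl

instance : Group (Heis p) where
  mul_assoc x y z := by ext <;> simp <;> ring
  one_mul x := by ext <;> simp
  mul_one x := by ext <;> simp
  inv_mul_cancel x := by ext <;> simp <;> ring

lemma commutatorElement_eq (x y : Heis p) :
    ⁅x, y⁆ = ⟨0, 0, x.a * y.b - x.b * y.a⟩ := by
  show x * y * x⁻¹ * y⁻¹ = _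
  ext <;> simp <;> ring

lemma commute_of_central {x : Heis p} (ha : x.a = 0) (hb : x.b = 0) (y : Heis p) :
    x * y = y * x := by
  ext <;> simp [ha, hb] <;> ring

/-- Projection of the Heisenberg group to its abelianization. -/
def proj : Heis p →* Multiplicative (ZMod p) × Multiplicative (ZMod p) where
  toFun x := (Multiplicative.ofAdd x.a, Multiplicative.ofAdd x.b)
  map_one' := rfl
  map_mul' x y := by simp [← ofAdd_add]

end Heis

/-! ### Auxiliary: pairwise coprime products of cyclic groups are cyclic -/

lemma lcm_eq_prod_of_coprime {ι : Type*} (s : Finset ι) (f : ι → ℕ)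
    (h : ∀ i ∈ s, ∀ j ∈ s, i ≠ j → Nat.Coprime (f i) (f j)) :
    s.lcm f = ∏ i ∈ s, f i := by
  classical
  induction s using Finset.induction_on with
  | empty => simp
  | @insert a s ha ih =>
    rw [Finset.lcm_insert, Finset.prod_insert ha,
      ih (fun i hi j hj hij => h i (Finset.mem_insert_of_mem hi) j
        (Finset.mem_insert_of_mem hj) hij)]
    have hcop : Nat.Coprime (f a) (∏ i ∈ s, f i) :=
      Nat.Coprime.prod_right fun i hi =>
        h a (Finset.mem_insert_self a s) i (Finset.mem_insert_of_mem hi)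
          (fun e => ha (e ▸ hi))
    exact hcop.lcm_eq_mul

lemma cyclic_of_pairwise_coprime {ι : Type} [Fintype ι] (n : ι → ℕ)
    (hn : ∀ i, 1 < n i)
    (h : ∀ i j, i ≠ j → Nat.Coprime (n i) (n j)) :
    IsCyclic (∀ i, Multiplicative (ZMod (n i))) := by
  have hz : ∀ i, NeZero (n i) := fun i => ⟨by have := hn i; omega⟩
  have : ∀ i, Finite (Multiplicative (ZMod (n i))) := fun i =>
    Finite.of_equiv (ZMod (n i)) Multiplicative.ofAdd
  have : Finite (∀ i, Multiplicative (ZMod (n i))) := Pi.finite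
  apply IsCyclic.of_exponent_eq_card
  rw [Monoid.exponent_pi, Nat.card_pi]
  have he : ∀ i, Monoid.exponent (Multiplicative (ZMod (n i))) = n i := fun i => by
    rw [Monoid.exponent_multiplicative, ZMod.exponent]
  have hc : ∀ i, Nat.card (Multiplicative (ZMod (n i))) = n i := fun i => by
    rw [Nat.card_congr Multiplicative.toAdd]; exact Nat.card_zmod (n i)
  simp only [he, hc]
  exact lcm_eq_prod_of_coprime _ _ (fun i _ j _ hij => h i j hij)

/-- a nontrivial finite abelian group that is not cyclic has
nontrivial Schur multiplier. -/
theorem schurMultiplier_nontrivial_of_not_cyclic (G : Type*) [CommGroup G] [Finite G]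
    [Nontrivial G] (h : ¬ IsCyclic G) : Nontrivial (SchurMultiplier G) := by
  classical
  obtain ⟨ι, hι, n, hn, ⟨e⟩⟩ := CommGroup.equiv_prod_multiplicative_zmod_of_finite G
  -- Find a prime dividing the orders of two distinct cyclic factors.
  have key : ∃ i j, i ≠ j ∧ ∃ p : ℕ, p.Prime ∧ p ∣ n i ∧ p ∣ n j := by
    by_contra hk
    push_neg at hk
    have hcop : ∀ i j, i ≠ j → Nat.Coprime (n i) (n j) := by
      intro i j hij
      by_contra hnc
      have hp : (Nat.gcd (n i) (n j)).minFac.Prime := Nat.minFac_prime hnc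
      exact (hk i j hij _ hp
        (dvd_trans (Nat.minFac_dvd _) (Nat.gcd_dvd_left _ _)))
        (dvd_trans (Nat.minFac_dvd _) (Nat.gcd_dvd_right _ _))
    haveI := cyclic_of_pairwise_coprime n hn hcop
    exact h (isCyclic_of_surjective e.symm.toMonoidHom e.symm.surjective)
  obtain ⟨i, j, hij, p, hp, hpi, hpj⟩ := key
  haveI : Fact p.Prime := ⟨hp⟩
  haveI : ∀ k, NeZero (n k) := fun k => ⟨by have := hn k; omega⟩
  -- The detecting homomorphism `q : G → ZMod p × ZMod p`.
  let A : Multiplicative (ZMod (n i)) →* Multiplicative (ZMod p) :=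
    AddMonoidHom.toMultiplicative (ZMod.castHom hpi (ZMod p)).toAddMonoidHom
  let B : Multiplicative (ZMod (n j)) →* Multiplicative (ZMod p) :=
    AddMonoidHom.toMultiplicative (ZMod.castHom hpj (ZMod p)).toAddMonoidHom
  let q : G →* Multiplicative (ZMod p) × Multiplicative (ZMod p) :=
    ((A.comp (Pi.evalMonoidHom _ i)).prod (B.comp (Pi.evalMonoidHom _ j))).comp
      e.toMonoidHom
  obtain ⟨u, hu⟩ := ZMod.ringHom_surjective (ZMod.castHom hpi (ZMod p)) 1
  obtain ⟨v, hv⟩ := ZMod.ringHom_surjective (ZMod.castHom hpj (ZMod p)) 1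
  let g₁ : G := e.symm (Pi.mulSingle i (Multiplicative.ofAdd u))
  let g₂ : G := e.symm (Pi.mulSingle j (Multiplicative.ofAdd v))
  have hq1 : q g₁ = (Multiplicative.ofAdd (1 : ZMod p), 1) := by
    simp only [q, g₁, MonoidHom.comp_apply, MulEquiv.coe_toMonoidHom,
      MulEquiv.apply_symm_apply, MonoidHom.prod_apply, Pi.evalMonoidHom_apply]
    rw [Pi.mulSingle_eq_same, Pi.mulSingle_eq_of_ne hij.symm]
    simp only [A, B, map_one]
    ext
    · exact congrArg Multiplicative.ofAdd hu
    · rfl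
  have hq2 : q g₂ = (1, Multiplicative.ofAdd (1 : ZMod p)) := by
    simp only [q, g₂, MonoidHom.comp_apply, MulEquiv.coe_toMonoidHom,
      MulEquiv.apply_symm_apply, MonoidHom.prod_apply, Pi.evalMonoidHom_apply]
    rw [Pi.mulSingle_eq_same, Pi.mulSingle_eq_of_ne hij]
    simp only [A, B, map_one]
    ext
    · rfl
    · exact congrArg Multiplicative.ofAdd hv
  -- Lift the presentation to the Heisenberg group.
  let σ : FreeGroup G →* Heis p :=
    FreeGroup.lift fun g =>
      (⟨Multiplicative.toAdd (q g).1, Multiplicative.toAdd (q g).2, 0⟩ : Heis p)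
  have hπσ : Heis.proj.comp σ = q.comp (presProj G) := by
    ext g
    · simp [σ, Heis.proj, presProj, FreeGroup.lift_apply_of]
    · simp [σ, Heis.proj, presProj, FreeGroup.lift_apply_of]
  have hcentral : ∀ r ∈ relSub G, ∀ y, σ r * y = y * σ r := by
    intro r hr y
    have h1 : Heis.proj (σ r) = 1 := by
      rw [← MonoidHom.comp_apply, hπσ, MonoidHom.comp_apply,
        MonoidHom.mem_ker.mp hr, map_one]
    have ha : (σ r).a = 0 := by
      have := congrArg Prod.fst h1
      exact ofAdd_eq_one.mp this
    have hb : (σ r).b = 0 := by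
      have := congrArg Prod.snd h1
      exact ofAdd_eq_one.mp this
    exact Heis.commute_of_central ha hb y
  have hker : ⁅(⊤ : Subgroup (FreeGroup G)), relSub G⁆ ≤ σ.ker := by
    rw [Subgroup.commutator_le]
    intro f _ r hr
    rw [MonoidHom.mem_ker, map_commutatorElement]
    exact commutatorElement_eq_one_iff_commute.mpr
      (Commute.symm (hcentral r hr (σ f)))
  let φ : hopfTop G →* Heis p := σ.comp (hopfTop G).subtype
  have hφ : hopfBot G ≤ φ.ker := by
    intro x hx
    exact hker (Subgroup.mem_subgroupOf.mp hx)
  let ψ : (hopfTop G ⧸ hopfBot G) →* Heis p := QuotientGroup.lift (hopfBot G) φ hφ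
  -- The witness commutator.
  have hg : g₁ * g₂ = g₂ * g₁ := mul_comm _ _
  let w : FreeGroup G := ⁅FreeGroup.of g₁, FreeGroup.of g₂⁆
  have hwmem : w ∈ hopfTop G := by
    rw [hopfTop, Subgroup.mem_inf]
    constructor
    · rw [relSub, MonoidHom.mem_ker, map_commutatorElement]
      have : presProj G (FreeGroup.of g₁) = g₁ := FreeGroup.lift_apply_of
      have : presProj G (FreeGroup.of g₂) = g₂ := FreeGroup.lift_apply_of
      simp only [presProj, FreeGroup.lift_apply_of, id]
      exact commutatorElement_eq_one_iff_commute.mpr hg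
    · exact Subgroup.commutator_mem_commutator (Subgroup.mem_top _) (Subgroup.mem_top _)
  have hσ1 : σ (FreeGroup.of g₁) = ⟨1, 0, 0⟩ := by
    have h0 : σ (FreeGroup.of g₁) =
        ⟨Multiplicative.toAdd (q g₁).1, Multiplicative.toAdd (q g₁).2, 0⟩ :=
      FreeGroup.lift_apply_of
    rw [h0, hq1]; rfl
  have hσ2 : σ (FreeGroup.of g₂) = ⟨0, 1, 0⟩ := by
    have h0 : σ (FreeGroup.of g₂) =
        ⟨Multiplicative.toAdd (q g₂).1, Multiplicative.toAdd (q g₂).2, 0⟩ :=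
      FreeGroup.lift_apply_of
    rw [h0, hq2]; rfl
  have hσw : σ w = ⟨0, 0, 1⟩ := by
    rw [show σ w = ⁅σ (FreeGroup.of g₁), σ (FreeGroup.of g₂)⁆ from
      map_commutatorElement σ _ _, hσ1, hσ2, Heis.commutatorElement_eq]
    ext <;> simp
  have hx : (QuotientGroup.mk ⟨w, hwmem⟩ : hopfTop G ⧸ hopfBot G) ≠ 1 := by
    intro hcontra
    have h1 : ψ (QuotientGroup.mk ⟨w, hwmem⟩) = 1 := by rw [hcontra, map_one]
    have h2 : ψ (QuotientGroup.mk ⟨w, hwmem⟩) = σ w := rfl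
    rw [h2, hσw] at h1
    have := congrArg Heis.c h1
    simp at this
  exact ⟨⟨QuotientGroup.mk ⟨w, hwmem⟩, 1, hx⟩⟩
end

section
/- If G is a finite abelian group isomorphic to ℤ/n₁ℤ ⊕ ℤ/n₂ℤ ⊕ … ⊕ ℤ/n_kℤ with n_{i+1} ∣ n_i for all i and k ≥ 2, then the Schur multiplier M(G) is isomorphic to ℤ/n₂ℤ ⊕ (ℤ/n₃ℤ)² ⊕ … ⊕ (ℤ/n_kℤ)^{k-1}. -/
open scoped commutatorElement

section generic
variable {H : Type*} [Group H]

lemma comm_central_left (a b c : H) (hc : ∀ z : H, Commute c z) :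
    ⁅a * c, b⁆ = ⁅a, b⁆ := by
  have h1 : c * b * c⁻¹ = b := by rw [(hc b).eq]; group
  calc ⁅a * c, b⁆ = a * (c * b * c⁻¹) * a⁻¹ * b⁻¹ := by group
  _ = a * b * a⁻¹ * b⁻¹ := by rw [h1]
  _ = ⁅a, b⁆ := by group

lemma comm_central_right (a b c : H) (hc : ∀ z : H, Commute c z) :
    ⁅a, b * c⁆ = ⁅a, b⁆ := by
  have h1 : c * a⁻¹ * c⁻¹ = a⁻¹ := by rw [(hc a⁻¹).eq]; group
  calc ⁅a, b * c⁆ = a * b * (c * a⁻¹ * c⁻¹) * b⁻¹ := by group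
  _ = a * b * a⁻¹ * b⁻¹ := by rw [h1]
  _ = ⁅a, b⁆ := by group

lemma comm_mul_left_central (a b c : H) (hc : ∀ z : H, Commute ⁅b, c⁆ z) :
    ⁅a * b, c⁆ = ⁅b, c⁆ * ⁅a, c⁆ := by
  have h1 : a * ⁅b, c⁆ * a⁻¹ = ⁅b, c⁆ := by rw [← (hc a).eq]; group
  calc ⁅a * b, c⁆ = (a * ⁅b, c⁆ * a⁻¹) * ⁅a, c⁆ := by
        simp only [commutatorElement_def]; group
  _ = ⁅b, c⁆ * ⁅a, c⁆ := by rw [h1]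

lemma comm_mul_right_central (a b c : H) (hc : ∀ z : H, Commute ⁅a, c⁆ z) :
    ⁅a, b * c⁆ = ⁅a, b⁆ * ⁅a, c⁆ := by
  have h1 : b * ⁅a, c⁆ * b⁻¹ = ⁅a, c⁆ := by rw [← (hc b).eq]; group
  calc ⁅a, b * c⁆ = ⁅a, b⁆ * (b * ⁅a, c⁆ * b⁻¹) := by
        simp only [commutatorElement_def]; group
  _ = ⁅a, b⁆ * ⁅a, c⁆ := by rw [h1]

end generic

section commG
variable (G : Type*) [CommGroup G]

/-- `[F, R]` as a subgroup of `F`. -/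
def hopfN : Subgroup (FreeGroup G) := ⁅(⊤ : Subgroup (FreeGroup G)), relSub G⁆

instance hopfN_normal : (hopfN G).Normal := Subgroup.commutator_normal _ _

variable {G}

lemma commutator_le_relSub : commutator (FreeGroup G) ≤ relSub G := by
  rw [commutator_def, Subgroup.commutator_le]
  intro a _ b _
  show presProj G ⁅a, b⁆ = 1
  rw [map_commutatorElement]
  exact commutatorElement_eq_one_iff_commute.2 (mul_comm _ _)

lemma hopfTop_eq : hopfTop G = commutator (FreeGroup G) :=
  inf_eq_right.2 commutator_le_relSub

lemma mem_hopfTop_comm (x y : FreeGroup G) : ⁅x, y⁆ ∈ hopfTop G := by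
  rw [hopfTop_eq, commutator_def]
  exact Subgroup.commutator_mem_commutator (Subgroup.mem_top x) (Subgroup.mem_top y)

lemma hopfN_le_relSub : hopfN G ≤ relSub G :=
  Subgroup.commutator_le_right _ _

/-- The embedding `M(G) → F/[F,R]`. -/
noncomputable def toFb : SchurMultiplier G →* FreeGroup G ⧸ hopfN G :=
  QuotientGroup.lift (hopfBot G)
    ((QuotientGroup.mk' (hopfN G)).comp (hopfTop G).subtype)
    (by intro w hw
        simp only [MonoidHom.mem_ker, MonoidHom.comp_apply, Subgroup.coe_subtype,
          QuotientGroup.mk'_apply, QuotientGroup.eq_one_iff]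
        exact hw)

lemma toFb_mk (w : FreeGroup G) (hw : w ∈ hopfTop G) :
    toFb (QuotientGroup.mk' (hopfBot G) ⟨w, hw⟩) = QuotientGroup.mk' (hopfN G) w := rfl

lemma toFb_injective : Function.Injective (toFb (G := G)) := by
  rw [injective_iff_map_eq_one]
  intro q hq
  induction q using QuotientGroup.induction_on with
  | _ w =>
    rw [show ((w : hopfTop G ⧸ hopfBot G) : SchurMultiplier G) = QuotientGroup.mk' (hopfBot G) w from rfl] at *
    change QuotientGroup.mk' (hopfN G) (w : FreeGroup G) = 1 at hq
    rw [QuotientGroup.mk'_apply, QuotientGroup.eq_one_iff] at hq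
    change ((w : hopfTop G ⧸ hopfBot G)) = 1
    rw [QuotientGroup.eq_one_iff]
    exact hq
end commG

section commG2
variable {G : Type*} [CommGroup G]

/-- projection to F/[F,R] -/
noncomputable abbrev fbMk : FreeGroup G →* FreeGroup G ⧸ hopfN G :=
  QuotientGroup.mk' (hopfN G)

lemma fb_central {r : FreeGroup G} (hr : r ∈ relSub G) (z : FreeGroup G ⧸ hopfN G) :
    Commute (fbMk r) z := by
  induction z using QuotientGroup.induction_on with
  | _ x =>
    have : fbMk ⁅r, x⁆ = 1 := by
      rw [QuotientGroup.mk'_apply, QuotientGroup.eq_one_iff]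
      have : ⁅r, x⁆ ∈ ⁅relSub G, (⊤ : Subgroup (FreeGroup G))⁆ :=
        Subgroup.commutator_mem_commutator hr (Subgroup.mem_top x)
      rwa [Subgroup.commutator_comm] at this
    rw [map_commutatorElement] at this
    exact commutatorElement_eq_one_iff_commute.1 this

lemma fb_comm_central (x y : FreeGroup G) (z : FreeGroup G ⧸ hopfN G) :
    Commute (fbMk ⁅x, y⁆) z :=
  fb_central (commutator_le_relSub (mem_hopfTop_comm x y).2) z

/-- The class of a commutator `⁅x, y⁆` in the Schur multiplier. -/
noncomputable def comCls (x y : FreeGroup G) : SchurMultiplier G :=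
  QuotientGroup.mk' (hopfBot G) ⟨⁅x, y⁆, mem_hopfTop_comm x y⟩

lemma toFb_comCls (x y : FreeGroup G) : toFb (comCls x y) = fbMk ⁅x, y⁆ := rfl

lemma comCls_eq_of_pi (x x' y y' : FreeGroup G)
    (hx : presProj G x = presProj G x') (hy : presProj G y = presProj G y') :
    comCls x y = comCls x' y' := by
  apply toFb_injective
  rw [toFb_comCls, toFb_comCls]
  have hrx : x'⁻¹ * x ∈ relSub G := by
    simp [relSub, MonoidHom.mem_ker, hx]
  have hry : y'⁻¹ * y ∈ relSub G := by
    simp [relSub, MonoidHom.mem_ker, hy]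
  have e1 : fbMk x = fbMk x' * fbMk (x'⁻¹ * x) := by rw [← map_mul]; congr 1; group
  have e2 : fbMk y = fbMk y' * fbMk (y'⁻¹ * y) := by rw [← map_mul]; congr 1; group
  rw [map_commutatorElement, map_commutatorElement, e1, e2,
    comm_central_left _ _ _ (fb_central hrx),
    comm_central_right _ _ _ (fb_central hry)]

lemma comCls_mul_left (x x' y : FreeGroup G) :
    comCls (x * x') y = comCls x' y * comCls x y := by
  apply toFb_injective
  rw [toFb_comCls, map_mul, toFb_comCls, toFb_comCls, map_commutatorElement, map_mul,
    comm_mul_left_central _ _ _ (by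
      rw [← map_commutatorElement]; exact fb_comm_central _ _),
    ← map_commutatorElement, ← map_commutatorElement]

lemma comCls_mul_right (x y y' : FreeGroup G) :
    comCls x (y * y') = comCls x y * comCls x y' := by
  apply toFb_injective
  rw [toFb_comCls, map_mul, toFb_comCls, toFb_comCls, map_commutatorElement, map_mul,
    comm_mul_right_central _ _ _ (by
      rw [← map_commutatorElement]; exact fb_comm_central _ _),
    ← map_commutatorElement, ← map_commutatorElement]

lemma comCls_self (x : FreeGroup G) : comCls x x = 1 := by
  apply toFb_injective
  rw [toFb_comCls, map_one, commutatorElement_self, map_one]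

lemma comCls_one_left (y : FreeGroup G) : comCls 1 y = 1 := by
  apply toFb_injective
  rw [toFb_comCls, map_one, commutatorElement_one_left, map_one]

lemma comCls_one_right (x : FreeGroup G) : comCls x 1 = 1 := by
  apply toFb_injective
  rw [toFb_comCls, map_one, commutatorElement_one_right, map_one]

lemma schur_comm (q q' : SchurMultiplier G) : q * q' = q' * q := by
  apply toFb_injective
  rw [map_mul, map_mul]
  induction q using QuotientGroup.induction_on with
  | _ w => exact (fb_central w.2.1 (toFb q')).eq

noncomputable instance (G : Type*) [CommGroup G] : CommGroup (SchurMultiplier G) :=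
  { (inferInstance : Group (SchurMultiplier G)) with mul_comm := schur_comm }

/-- the bilinear commutator pairing `G → G → M(G)` -/
noncomputable def schurB : G →* (G →* SchurMultiplier G) :=
  MonoidHom.mk' (fun g => MonoidHom.mk'
      (fun h => comCls (FreeGroup.of g) (FreeGroup.of h))
      (fun h h' => by
        show comCls (FreeGroup.of g) (FreeGroup.of (h * h')) =
          comCls (FreeGroup.of g) (FreeGroup.of h) * comCls (FreeGroup.of g) (FreeGroup.of h')
        have : comCls (FreeGroup.of g) (FreeGroup.of (h * h')) =
            comCls (FreeGroup.of g) (FreeGroup.of h * FreeGroup.of h') :=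
          comCls_eq_of_pi _ _ _ _ rfl (by simp [presProj])
        rw [this, comCls_mul_right]))
    (fun g g' => by
      ext h
      show comCls (FreeGroup.of (g * g')) (FreeGroup.of h) =
        comCls (FreeGroup.of g) (FreeGroup.of h) * comCls (FreeGroup.of g') (FreeGroup.of h)
      have : comCls (FreeGroup.of (g * g')) (FreeGroup.of h) =
          comCls (FreeGroup.of g * FreeGroup.of g') (FreeGroup.of h) :=
        comCls_eq_of_pi _ _ _ _ (by simp [presProj]) rfl
      rw [this, comCls_mul_left, mul_comm])

lemma schurB_apply (g h : G) :
    schurB g h = comCls (FreeGroup.of g) (FreeGroup.of h) := rfl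

lemma schurB_anticomm (g h : G) : schurB g h = (schurB h g)⁻¹ := by
  have := comCls_self (G := G) (FreeGroup.of g * FreeGroup.of h)
  rw [comCls_mul_left, comCls_mul_right, comCls_mul_right, comCls_self, comCls_self,
    one_mul, mul_one] at this
  rw [schurB_apply, schurB_apply, eq_inv_iff_mul_eq_one, mul_comm]
  exact this
end commG2



section main
variable {k : ℕ} (n : Fin k → ℕ)
  (hdvd : ∀ (i : ℕ) (hi : i + 1 < k), n ⟨i + 1, hi⟩ ∣ n ⟨i, Nat.lt_of_succ_lt hi⟩)

lemma hdvd_le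
    (hdvd : ∀ (i : ℕ) (hi : i + 1 < k), n ⟨i + 1, hi⟩ ∣ n ⟨i, Nat.lt_of_succ_lt hi⟩) :
    ∀ i j : Fin k, j.val ≤ i.val → n i ∣ n j := by
  suffices H : ∀ (d : ℕ) (i j : Fin k), i.val = j.val + d → n i ∣ n j by
    intro i j h
    exact H (i.val - j.val) i j (by omega)
  intro d
  induction d with
  | zero =>
    intro i j h
    have : i = j := Fin.ext (by omega)
    rw [this]
  | succ d ih =>
    intro i j h
    have hlt : j.val + d + 1 < k := by have h2 := i.2; omega
    have h1 : n ⟨j.val + d + 1, hlt⟩ ∣ n ⟨j.val + d, Nat.lt_of_succ_lt hlt⟩ :=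
      hdvd (j.val + d) hlt
    have h2 : n ⟨j.val + d, Nat.lt_of_succ_lt hlt⟩ ∣ n j :=
      ih ⟨j.val + d, Nat.lt_of_succ_lt hlt⟩ j rfl
    have hi : i = ⟨j.val + d + 1, hlt⟩ := by
      apply Fin.ext
      show i.val = j.val + d + 1
      omega
    rw [hi]
    exact dvd_trans h1 h2

/-- The index `j < i` as an element of `Fin k`. -/
def jfull {k : ℕ} (i : Fin k) (j : Fin i.val) : Fin k := ⟨j.1, j.2.trans i.2⟩

/-- The target group `ℤ/n₂ ⊕ (ℤ/n₃)² ⊕ ⋯`. -/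
abbrev Tgt := ∀ i : Fin k, (Fin i.val → Multiplicative (ZMod (n i)))

variable {G : Type*} [CommGroup G] (e : G ≃* ∀ i : Fin k, Multiplicative (ZMod (n i)))

/-- additive coordinates of `g : G`. -/
def acoord (g : G) (i : Fin k) : ZMod (n i) := Multiplicative.toAdd (e g i)

lemma acoord_mul (g h : G) (i : Fin k) :
    acoord n e (g * h) i = acoord n e g i + acoord n e h i := by
  simp [acoord]

lemma acoord_one (i : Fin k) : acoord n e 1 i = 0 := by simp [acoord]

lemma acoord_inv (g : G) (i : Fin k) : acoord n e g⁻¹ i = -acoord n e g i := by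
  simp [acoord]

/-- The 2-cocycle `ω(g,h)_{i,j} = g_j · h_i`. -/
def omg (g h : G) : Tgt n := fun i j =>
  Multiplicative.ofAdd
    ((ZMod.castHom (hdvd_le n hdvd i (jfull i j) (le_of_lt j.2)) (ZMod (n i)))
        (acoord n e g (jfull i j)) * acoord n e h i)

lemma omg_mul_left (g g' h : G) :
    omg n hdvd e (g * g') h = omg n hdvd e g h * omg n hdvd e g' h := by
  funext i j
  simp only [Pi.mul_apply, omg, acoord_mul, map_add, add_mul, ofAdd_add]

lemma omg_mul_right (g h h' : G) :
    omg n hdvd e g (h * h') = omg n hdvd e g h * omg n hdvd e g h' := by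
  funext i j
  simp only [Pi.mul_apply, omg, acoord_mul, mul_add, ofAdd_add]

lemma omg_one_left (h : G) : omg n hdvd e 1 h = 1 := by
  funext i j
  simp only [Pi.one_apply, omg, acoord_one, map_zero, zero_mul, ofAdd_zero]

lemma omg_one_right (g : G) : omg n hdvd e g 1 = 1 := by
  funext i j
  simp only [Pi.one_apply, omg, acoord_one, mul_zero, ofAdd_zero]

lemma omg_inv_left (g h : G) : omg n hdvd e g⁻¹ h = (omg n hdvd e g h)⁻¹ := by
  funext i j
  simp only [Pi.inv_apply, omg, acoord_inv, map_neg, neg_mul, ofAdd_neg]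

lemma omg_inv_right (g h : G) : omg n hdvd e g h⁻¹ = (omg n hdvd e g h)⁻¹ := by
  funext i j
  simp only [Pi.inv_apply, omg, acoord_inv, mul_neg, ofAdd_neg]

/-- The central extension of `G` by `Tgt n` determined by the cocycle `omg`. -/
@[ext]
structure CE
    (n : Fin k → ℕ)
    (hdvd : ∀ (i : ℕ) (hi : i + 1 < k), n ⟨i + 1, hi⟩ ∣ n ⟨i, Nat.lt_of_succ_lt hi⟩)
    (e : G ≃* ∀ i : Fin k, Multiplicative (ZMod (n i))) where
  g : G
  t : Tgt n

namespace CE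

variable {n} {hdvd} {e}

instance : One (CE n hdvd e) := ⟨⟨1, 1⟩⟩
instance : Mul (CE n hdvd e) := ⟨fun x y => ⟨x.g * y.g, x.t * y.t * omg n hdvd e x.g y.g⟩⟩
instance : Inv (CE n hdvd e) := ⟨fun x => ⟨x.g⁻¹, (x.t * omg n hdvd e x.g x.g⁻¹)⁻¹⟩⟩

@[simp] lemma mul_g (x y : CE n hdvd e) : (x * y).g = x.g * y.g := rfl
@[simp] lemma mul_t (x y : CE n hdvd e) :
    (x * y).t = x.t * y.t * omg n hdvd e x.g y.g := rfl
@[simp] lemma inv_g (x : CE n hdvd e) : (x⁻¹).g = x.g⁻¹ := rfl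
@[simp] lemma inv_t (x : CE n hdvd e) :
    (x⁻¹).t = (x.t * omg n hdvd e x.g x.g⁻¹)⁻¹ := rfl
@[simp] lemma one_g : (1 : CE n hdvd e).g = 1 := rfl
@[simp] lemma one_t : (1 : CE n hdvd e).t = 1 := rfl

instance : Group (CE n hdvd e) :=
  Group.ofLeftAxioms
    (fun x y z => by
      refine CE.ext ?_ ?_
      · exact mul_assoc _ _ _
      · show x.t * y.t * omg n hdvd e x.g y.g * z.t * omg n hdvd e (x.g * y.g) z.g =
          x.t * (y.t * z.t * omg n hdvd e y.g z.g) * omg n hdvd e x.g (y.g * z.g)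
        rw [omg_mul_left, omg_mul_right]
        simp only [mul_assoc, mul_comm, mul_left_comm])
    (fun x => by
      refine CE.ext ?_ ?_
      · exact one_mul _
      · show 1 * x.t * omg n hdvd e 1 x.g = x.t
        rw [omg_one_left, one_mul, mul_one])
    (fun x => by
      refine CE.ext ?_ ?_
      · exact inv_mul_cancel _
      · show (x.t * omg n hdvd e x.g x.g⁻¹)⁻¹ * x.t * omg n hdvd e x.g⁻¹ x.g = 1
        rw [omg_inv_right, omg_inv_left]
        simp only [mul_inv_rev, inv_inv, mul_assoc]
        group)

end CE

section withG

/-- The lift `F → CE` of the identity. -/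
noncomputable def cePhi : FreeGroup G →* CE n hdvd e :=
  FreeGroup.lift (fun g => ⟨g, 1⟩)

/-- First projection `CE → G`. -/
def ceFst : CE n hdvd e →* G :=
  { toFun := CE.g, map_one' := rfl, map_mul' := fun _ _ => rfl }

lemma cePhi_g (w : FreeGroup G) : (cePhi n hdvd e w).g = presProj G w := by
  have h : (ceFst n hdvd e).comp (cePhi n hdvd e) = presProj G := by
    apply FreeGroup.ext_hom
    intro a
    simp [cePhi, presProj, ceFst]
  exact DFunLike.congr_fun h w

lemma ce_central (t : Tgt n) (y : CE n hdvd e) : Commute (⟨1, t⟩ : CE n hdvd e) y := by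
  show _ = _
  refine CE.ext ?_ ?_
  · show 1 * y.g = y.g * 1
    rw [one_mul, mul_one]
  · show t * y.t * omg n hdvd e 1 y.g = y.t * t * omg n hdvd e y.g 1
    rw [omg_one_left, omg_one_right, mul_one, mul_one, mul_comm]

lemma hopfN_le_ker : hopfN G ≤ (cePhi n hdvd e).ker := by
  rw [hopfN, Subgroup.commutator_le]
  intro f _ r hr
  rw [MonoidHom.mem_ker, map_commutatorElement]
  apply commutatorElement_eq_one_iff_commute.2
  have h1 : (cePhi n hdvd e r).g = 1 := by
    rw [cePhi_g]; exact hr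
  have h2 : cePhi n hdvd e r = ⟨1, (cePhi n hdvd e r).t⟩ := CE.ext h1 rfl
  rw [h2]
  exact (ce_central n hdvd e _ _).symm

/-- The homomorphism `R ∩ [F,F] → Tgt`. -/
noncomputable def psi0 : (hopfTop G : Subgroup (FreeGroup G)) →* Tgt n :=
  { toFun := fun w => (cePhi n hdvd e w.1).t
    map_one' := by
      show (cePhi n hdvd e ((1 : (hopfTop G : Subgroup (FreeGroup G))) : FreeGroup G)).t = 1
      rw [OneMemClass.coe_one, map_one]; rfl
    map_mul' := fun w w' => by
      show (cePhi n hdvd e (w.1 * w'.1)).t = _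
      rw [map_mul, CE.mul_t]
      have h1 : (cePhi n hdvd e w.1).g = 1 := by
        rw [cePhi_g]; exact w.2.1
      rw [h1, omg_one_left, mul_one] }

/-- The homomorphism `ψ : M(G) → Tgt` induced by the cocycle `omg`. -/
noncomputable def psi : SchurMultiplier G →* Tgt n :=
  QuotientGroup.lift (hopfBot G) (psi0 n hdvd e)
    (by intro w hw
        have h1 : cePhi n hdvd e w.1 = 1 := hopfN_le_ker n hdvd e (Subgroup.mem_subgroupOf.mp hw)
        show (cePhi n hdvd e w.1).t = 1
        rw [h1]; rfl)

lemma psi_comCls (g h : G) :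
    psi n hdvd e (comCls (FreeGroup.of g) (FreeGroup.of h)) =
      omg n hdvd e g h * (omg n hdvd e h g)⁻¹ := by
  show (cePhi n hdvd e ⁅FreeGroup.of g, FreeGroup.of h⁆).t = _
  have hg : cePhi n hdvd e (FreeGroup.of g) = ⟨g, 1⟩ := FreeGroup.lift_apply_of
  have hh : cePhi n hdvd e (FreeGroup.of h) = ⟨h, 1⟩ := FreeGroup.lift_apply_of
  rw [map_commutatorElement, hg, hh, commutatorElement_def]
  funext i j
  apply Multiplicative.toAdd.injective
  simp only [CE.mul_t, CE.mul_g, CE.inv_t, CE.inv_g, omg, acoord_mul, acoord_inv, one_mul,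
    mul_one, Pi.mul_apply, Pi.inv_apply, Pi.one_apply, toAdd_mul, toAdd_inv, toAdd_ofAdd,
    map_add, map_neg, toAdd_one, mul_inv_rev, inv_inv]
  ring

end withG

/-- auxiliary data for `zmodHom`. -/
noncomputable def zmodPre {A : Type*} [CommGroup A] (m : ℕ) (q : A) (hq : q ^ m = 1) :
    {f : ℤ →+ Additive A // f (m : ℤ) = 0} :=
  ⟨zmultiplesHom (Additive A) (Additive.ofMul q), by
    simp only [zmultiplesHom_apply]
    rw [← ofMul_zpow, zpow_natCast, hq]
    rfl⟩

/-- lift of an element of order dividing `m` to a hom from `ZMod m`. -/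
noncomputable def zmodHom {A : Type*} [CommGroup A] (m : ℕ) (q : A) (hq : q ^ m = 1) :
    Multiplicative (ZMod m) →* A :=
  AddMonoidHom.toMultiplicativeLeft (ZMod.lift m (zmodPre m q hq))

lemma zmodHom_of_one {A : Type*} [CommGroup A] (m : ℕ) (q : A) (hq : q ^ m = 1) :
    zmodHom m q hq (Multiplicative.ofAdd (1 : ZMod m)) = q := by
  have h1 : (Multiplicative.ofAdd (1 : ZMod m)) = Multiplicative.ofAdd (((1 : ℤ) : ZMod m)) := by
    norm_num
  rw [zmodHom, h1]
  show Additive.toMul ((ZMod.lift m (zmodPre m q hq)) (((1 : ℤ) : ZMod m))) = q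
  rw [ZMod.lift_coe]
  simp [zmodPre]

lemma val_cast_self {m : ℕ} (hm : 0 < m) (a : ZMod m) : ((a.val : ℕ) : ZMod m) = a :=
  @ZMod.natCast_rightInverse m ⟨hm.ne'⟩ a

section phiSide

/-- generator of the `i`-th cyclic factor of `G`. -/
noncomputable def xg (i : Fin k) : G :=
  e.symm (Pi.mulSingle i (Multiplicative.ofAdd (1 : ZMod (n i))))

lemma e_xg (i : Fin k) :
    e (xg n e i) = Pi.mulSingle i (Multiplicative.ofAdd (1 : ZMod (n i))) :=
  e.apply_symm_apply _

lemma acoord_xg_same (i : Fin k) : acoord n e (xg n e i) i = 1 := by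
  simp [acoord, e_xg]

lemma acoord_xg_ne {i l : Fin k} (h : l ≠ i) : acoord n e (xg n e i) l = 0 := by
  simp [acoord, e_xg, Pi.mulSingle_eq_of_ne h]

lemma xg_pow (i : Fin k) : xg n e i ^ (n i) = 1 := by
  apply e.injective
  rw [map_pow, e_xg, ← Pi.mulSingle_pow, ← ofAdd_nsmul]
  simp [nsmul_eq_mul, ZMod.natCast_self]

/-- the generator `⟦[x_j, x_i]⟧` of the Schur multiplier. -/
noncomputable def gam (i : Fin k) (j : Fin i.val) : SchurMultiplier G :=
  schurB (xg n e (jfull i j)) (xg n e i)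

lemma gam_pow (i : Fin k) (j : Fin i.val) : gam n e i j ^ (n i) = 1 := by
  rw [gam, ← map_pow, xg_pow, map_one]

/-- The homomorphism `φ : Tgt → M(G)`. -/
noncomputable def phi : Tgt n →* SchurMultiplier G :=
  MonoidHom.noncommPiCoprod
    (fun i => MonoidHom.noncommPiCoprod
      (fun j => zmodHom (n i) (gam n e i j) (gam_pow n e i j))
      (fun _ _ _ _ _ => Commute.all _ _))
    (fun _ _ _ _ _ => Commute.all _ _)

lemma phi_single (i : Fin k) (j : Fin i.val) :
    phi n e (Pi.mulSingle i (Pi.mulSingle j (Multiplicative.ofAdd (1 : ZMod (n i))))) =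
      gam n e i j := by
  rw [phi]
  erw [MonoidHom.noncommPiCoprod_mulSingle, MonoidHom.noncommPiCoprod_mulSingle,
    zmodHom_of_one]

lemma jfull_ne_self (i : Fin k) (j : Fin i.val) : jfull i j ≠ i := by
  apply Fin.ne_of_val_ne
  show j.val ≠ i.val
  exact Nat.ne_of_lt j.2

lemma psi_gam (i : Fin k) (j : Fin i.val) :
    psi n hdvd e (gam n e i j) =
      Pi.mulSingle i (Pi.mulSingle j (Multiplicative.ofAdd (1 : ZMod (n i)))) := by
  rw [gam, schurB_apply, psi_comCls]
  funext i' j'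
  apply Multiplicative.toAdd.injective
  simp only [Pi.mul_apply, Pi.inv_apply, omg, toAdd_mul, toAdd_inv, toAdd_ofAdd]
  have h2 : (ZMod.castHom (hdvd_le n hdvd i' (jfull i' j') (le_of_lt j'.2)) (ZMod (n i')))
        (acoord n e (xg n e i) (jfull i' j')) * acoord n e (xg n e (jfull i j)) i' = 0 := by
    rcases eq_or_ne i' (jfull i j) with h | h
    · have hne : jfull i' j' ≠ i := by
        apply Fin.ne_of_val_ne
        show j'.val ≠ i.val
        have h1 := j'.2
        have h3 := j.2
        have h4 : i'.val = j.val := by rw [h]; rfl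
        omega
      rw [acoord_xg_ne n e hne, map_zero, zero_mul]
    · rw [acoord_xg_ne n e h, mul_zero]
  rw [h2, neg_zero, add_zero]
  by_cases hii : i' = i
  · subst hii
    rw [Pi.mulSingle_eq_same, acoord_xg_same, mul_one]
    by_cases hjj : j' = j
    · subst hjj
      rw [acoord_xg_same, map_one, Pi.mulSingle_eq_same, toAdd_ofAdd]
    · have hne : jfull i' j' ≠ jfull i' j := by
        apply Fin.ne_of_val_ne
        show j'.val ≠ j.val
        exact fun hv => hjj (Fin.ext hv)
      rw [acoord_xg_ne n e hne, map_zero, Pi.mulSingle_eq_of_ne hjj]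
      rfl
  · rw [acoord_xg_ne n e hii, mul_zero, Pi.mulSingle_eq_of_ne hii]
    rfl

lemma psi_phi_id (hpos : ∀ i, 0 < n i) : (psi n hdvd e).comp (phi n e) = MonoidHom.id (Tgt n) := by
  apply MonoidHom.functions_ext
  intro i x
  have key : ∀ (y : Multiplicative (ZMod (n i))) (j : Fin i.val),
      psi n hdvd e (phi n e (Pi.mulSingle i (Pi.mulSingle j y)))
        = Pi.mulSingle i (Pi.mulSingle j y) := by
    intro y j
    obtain ⟨c, rfl⟩ : ∃ c : ℕ, y = Multiplicative.ofAdd (1 : ZMod (n i)) ^ c := by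
      refine ⟨(Multiplicative.toAdd y).val, ?_⟩
      rw [← ofAdd_nsmul, nsmul_eq_mul, mul_one, val_cast_self (hpos i)]
      rfl
    rw [Pi.mulSingle_pow, Pi.mulSingle_pow, map_pow, map_pow, phi_single,
      psi_gam n hdvd e]
  have h : ((psi n hdvd e).comp (phi n e)).comp
        (MonoidHom.mulSingle (fun i : Fin k => Fin i.val → Multiplicative (ZMod (n i))) i)
      = MonoidHom.mulSingle (fun i : Fin k => Fin i.val → Multiplicative (ZMod (n i))) i := by
    apply MonoidHom.functions_ext
    intro j y
    exact key y j
  exact DFunLike.congr_fun h x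

lemma g_decomp (hpos : ∀ i, 0 < n i) (g : G) : g = ∏ i : Fin k, xg n e i ^ (acoord n e g i).val := by
  apply e.injective
  rw [map_prod]
  rw [Finset.prod_congr rfl (fun i _ => show e (xg n e i ^ (acoord n e g i).val)
      = Pi.mulSingle i (e g i) by
    rw [map_pow, e_xg, ← Pi.mulSingle_pow, ← ofAdd_nsmul, nsmul_eq_mul, mul_one,
      val_cast_self (hpos i)]
    rfl)]
  rw [Finset.univ_prod_mulSingle]

lemma schurB_mem_range (hpos : ∀ i, 0 < n i) (g h : G) : schurB g h ∈ (phi n e).range := by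
  have base : ∀ a b : Fin k, a.val < b.val → schurB (xg n e a) (xg n e b) ∈ (phi n e).range := by
    intro a b hab
    refine ⟨Pi.mulSingle b (Pi.mulSingle ⟨a.val, hab⟩ (Multiplicative.ofAdd 1)), ?_⟩
    rw [phi_single, gam]
    congr 1
  have e1 : schurB g h = ∏ i, (schurB (xg n e i) h) ^ (acoord n e g i).val := by
    conv_lhs => rw [g_decomp n e hpos g]
    rw [show schurB (∏ i, xg n e i ^ (acoord n e g i).val) h
        = (MonoidHom.flip schurB h) (∏ i, xg n e i ^ (acoord n e g i).val) from rfl, map_prod]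
    simp only [map_pow, MonoidHom.flip_apply]
  have e2 : ∀ i, schurB (xg n e i) h
      = ∏ i', (schurB (xg n e i) (xg n e i')) ^ (acoord n e h i').val := by
    intro i
    conv_lhs => rw [g_decomp n e hpos h]
    rw [map_prod]
    simp only [map_pow]
  rw [e1]
  refine Subgroup.prod_mem _ fun i _ => ?_
  rw [e2 i]
  refine Subgroup.pow_mem _ ?_ _
  refine Subgroup.prod_mem _ fun i' _ => ?_
  refine Subgroup.pow_mem _ ?_ _
  rcases lt_trichotomy i.val i'.val with hlt | heq | hgt
  · exact base i i' hlt
  · have : i = i' := Fin.ext heq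
    subst this
    rw [schurB_apply, comCls_self]
    exact Subgroup.one_mem _
  · rw [schurB_anticomm]
    exact Subgroup.inv_mem _ (base i' i hgt)

lemma phi_surj (hpos : ∀ i, 0 < n i) : Function.Surjective (phi n e) := by
  have main : ∀ (w : FreeGroup G) (hw' : w ∈ Subgroup.closure (commutatorSet (FreeGroup G))),
      ∀ hw : w ∈ hopfTop G,
        (QuotientGroup.mk' (hopfBot G) ⟨w, hw⟩ : SchurMultiplier G) ∈ (phi n e).range := by
    intro w hw'
    induction hw' using Subgroup.closure_induction with
    | mem x hx =>
      obtain ⟨a, b, rfl⟩ := hx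
      intro hw
      have hc : (QuotientGroup.mk' (hopfBot G) ⟨⁅a, b⁆, hw⟩ : SchurMultiplier G)
          = comCls a b := rfl
      rw [hc, comCls_eq_of_pi a (FreeGroup.of (presProj G a)) b (FreeGroup.of (presProj G b))
        (by simp [presProj]) (by simp [presProj])]
      exact schurB_mem_range n e hpos (presProj G a) (presProj G b)
    | one =>
      intro hw
      have : (QuotientGroup.mk' (hopfBot G) ⟨1, hw⟩ : SchurMultiplier G) = 1 := by
        have h1 : (⟨1, hw⟩ : (hopfTop G : Subgroup (FreeGroup G))) = 1 := Subtype.ext rfl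
        rw [h1, map_one]
      rw [this]
      exact Subgroup.one_mem _
    | mul x y hx hy ihx ihy =>
      intro hw
      have mx : x ∈ hopfTop G := by rw [hopfTop_eq, commutator_eq_closure]; exact hx
      have my : y ∈ hopfTop G := by rw [hopfTop_eq, commutator_eq_closure]; exact hy
      have : (QuotientGroup.mk' (hopfBot G) ⟨x * y, hw⟩ : SchurMultiplier G)
          = QuotientGroup.mk' (hopfBot G) ⟨x, mx⟩ * QuotientGroup.mk' (hopfBot G) ⟨y, my⟩ := by
        rw [← map_mul]
        rfl
      rw [this]
      exact Subgroup.mul_mem _ (ihx mx) (ihy my)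
    | inv x hx ihx =>
      intro hw
      have mx : x ∈ hopfTop G := by rw [hopfTop_eq, commutator_eq_closure]; exact hx
      have : (QuotientGroup.mk' (hopfBot G) ⟨x⁻¹, hw⟩ : SchurMultiplier G)
          = (QuotientGroup.mk' (hopfBot G) ⟨x, mx⟩)⁻¹ := by
        rw [← map_inv]
        rfl
      rw [this]
      exact Subgroup.inv_mem _ (ihx mx)
  intro q
  induction q using QuotientGroup.induction_on with
  | _ w =>
    have hw' : w.1 ∈ Subgroup.closure (commutatorSet (FreeGroup G)) := by
      rw [← commutator_eq_closure, ← hopfTop_eq]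
      exact w.2
    obtain ⟨t, ht⟩ := main w.1 hw' w.2
    exact ⟨t, ht⟩

end phiSide

end main

/-- if `G ≅ ℤ/n₁ ⊕ ⋯ ⊕ ℤ/n_k` with `n_{i+1} ∣ n_i` and `k ≥ 2`, then
`M(G) ≅ ℤ/n₂ ⊕ (ℤ/n₃)² ⊕ ⋯ ⊕ (ℤ/n_k)^{k-1}`. -/
theorem schurMultiplier_of_abelian (k : ℕ) (hk : 2 ≤ k) (n : Fin k → ℕ)
    (hpos : ∀ i, 0 < n i)
    (hdvd : ∀ (i : ℕ) (hi : i + 1 < k), n ⟨i + 1, hi⟩ ∣ n ⟨i, Nat.lt_of_succ_lt hi⟩)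
    (G : Type*) [CommGroup G] [Finite G]
    (e : G ≃* ∀ i : Fin k, Multiplicative (ZMod (n i))) :
    Nonempty (SchurMultiplier G ≃*
      ∀ i : Fin k, (Fin i.val → Multiplicative (ZMod (n i)))) := by
  have hcomp : ∀ t, psi n hdvd e (phi n e t) = t := fun t =>
    DFunLike.congr_fun (psi_phi_id n hdvd e hpos) t
  have hsurj := phi_surj n e hpos
  refine ⟨MulEquiv.ofBijective (psi n hdvd e) ⟨?_, ?_⟩⟩
  · intro a b hab
    obtain ⟨s, rfl⟩ := hsurj a
    obtain ⟨s', rfl⟩ := hsurj b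
    rw [hcomp, hcomp] at hab
    rw [hab]
  · intro t
    exact ⟨phi n e t, hcomp t⟩
end

section
/- Let G be a group of order p³ (p an odd prime) that is nonabelian and contains an element of order p². Then G is isomorphic to ⟨a, b ∣ a^{p²} = 1, b^p = 1, b⁻¹ab = a^{1+p}⟩. -/
section Aux
variable {H : Type*} [Group H]

lemma conj_pow' (a b : H) (n : ℕ) : b⁻¹ * a ^ n * b = (b⁻¹ * a * b) ^ n := by
  induction n with
  | zero => simp
  | succ n ih => rw [pow_succ, pow_succ, ← ih]; group

lemma conj_zpow' (a b : H) (z : ℤ) : b⁻¹ * a ^ z * b = (b⁻¹ * a * b) ^ z := by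
  have := map_zpow (MulAut.conj b⁻¹) a z
  simpa [MulAut.conj_apply, mul_assoc] using this

lemma conj_iterate (a b : H) (u : ℕ) (h : b⁻¹ * a * b = a ^ u) :
    ∀ j : ℕ, (b ^ j)⁻¹ * a * b ^ j = a ^ u ^ j := by
  intro j
  induction j with
  | zero => simp
  | succ j ih =>
      have : (b ^ (j+1))⁻¹ * a * b ^ (j+1) = b⁻¹ * ((b ^ j)⁻¹ * a * b ^ j) * b := by
        rw [pow_succ]; group
      rw [this, ih, conj_pow', h, ← pow_mul, ← pow_succ']

lemma conj_back (a b : H) (u q : ℕ) (hq : q ≠ 0) (h : b⁻¹ * a * b = a ^ u)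
    (hc : Commute (b ^ q) a) : b * a * b⁻¹ = a ^ u ^ (q - 1) := by
  have h1 : (b ^ (q-1))⁻¹ * a * b ^ (q-1) = a ^ u ^ (q-1) := conj_iterate a b u h (q-1)
  have h2 : b ^ (q - 1) = b ^ q * b⁻¹ := by
    refine eq_mul_inv_iff_mul_eq.mpr ?_
    rw [← pow_succ]
    congr 1
    omega
  have h3 : (b ^ q)⁻¹ * a * b ^ q = a := by
    rw [mul_assoc, ← hc.eq, ← mul_assoc, inv_mul_cancel, one_mul]
  rw [h2] at h1
  calc b * a * b⁻¹ = b * ((b ^ q)⁻¹ * a * b ^ q) * b⁻¹ := by rw [h3]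
  _ = (b ^ q * b⁻¹)⁻¹ * a * (b ^ q * b⁻¹) := by simp [mul_inv_rev, mul_assoc]
  _ = a ^ u ^ (q-1) := h1

lemma prod_pow_formula (x b : H) (w : ℕ) (h : b * x * b⁻¹ = x ^ w) (n : ℕ) :
    (x * b) ^ n = x ^ (∑ i ∈ Finset.range n, w ^ i) * b ^ n := by
  induction n with
  | zero => simp
  | succ n ih =>
      have key : b * x ^ (∑ i ∈ Finset.range n, w ^ i) * b⁻¹
          = x ^ (w * ∑ i ∈ Finset.range n, w ^ i) := by
        have := conj_pow' x b⁻¹ (∑ i ∈ Finset.range n, w ^ i)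
        rw [inv_inv] at this
        rw [this, h, ← pow_mul, mul_comm]
      have hsum : ∑ i ∈ Finset.range (n+1), w ^ i
          = 1 + w * ∑ i ∈ Finset.range n, w ^ i := by
        rw [geom_sum_succ]; ring
      calc (x * b) ^ (n+1) = (x * b) * (x ^ (∑ i ∈ Finset.range n, w ^ i) * b ^ n) := by
            rw [pow_succ', ih]
      _ = x * (b * x ^ (∑ i ∈ Finset.range n, w ^ i) * b⁻¹) * (b * b ^ n) := by
            simp [mul_assoc]
      _ = x * x ^ (w * ∑ i ∈ Finset.range n, w ^ i) * (b * b ^ n) := by rw [key]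
      _ = x ^ (1 + w * ∑ i ∈ Finset.range n, w ^ i) * b ^ (n+1) := by
            rw [pow_add, pow_one, pow_succ' b n]
      _ = _ := by rw [hsum]

end Aux



lemma one_add_nilpotent_pow' {R : Type*} [CommRing R] (x : R) (hx : x * x = 0) (n : ℕ) :
    (1 + x) ^ n = 1 + (n : R) * x := by
  induction n with
  | zero => simp
  | succ n ih =>
      calc (1+x) ^ (n+1) = (1 + (n:R)*x) * (1+x) := by rw [pow_succ, ih]
      _ = 1 + ((n:R)+1)*x + (n:R)*(x*x) := by ring
      _ = 1 + ((n+1 : ℕ):R)*x := by rw [hx]; push_cast; ring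

section ZModCalc
variable (p : ℕ)

lemma eps_sq : ((p : ZMod (p^2)) * (p : ZMod (p^2))) = 0 := by
  calc ((p : ZMod (p^2)) * p) = ((p^2 : ℕ) : ZMod (p^2)) := by push_cast; ring
  _ = 0 := ZMod.natCast_self _

lemma geom_sum_key (hp : p.Prime) (hodd : Odd p) :
    ((∑ i ∈ Finset.range p, ((1+p)^(p-1) : ℕ)^i : ℕ) : ZMod (p^2)) = (p : ZMod (p^2)) := by
  set R := ZMod (p^2)
  set ε : R := (p : R) with hεdef
  have hε : ε * ε = 0 := eps_sq p
  set c : R := ((p-1 : ℕ) : R) with hcdef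
  have hx : (c * ε) * (c * ε) = 0 := by
    calc (c*ε)*(c*ε) = c*c*(ε*ε) := by ring
    _ = 0 := by rw [hε, mul_zero]
  have hw : (((1+p)^(p-1) : ℕ) : R) = 1 + c * ε := by
    push_cast
    rw [one_add_nilpotent_pow' ε hε (p-1)]
  have hterm : ∀ i : ℕ, (((((1+p)^(p-1))^i : ℕ)) : R) = 1 + (i : R) * (c * ε) := by
    intro i
    rw [Nat.cast_pow, hw, one_add_nilpotent_pow' (c*ε) hx]
  rw [Nat.cast_sum]
  simp only [hterm]
  rw [Finset.sum_add_distrib, Finset.sum_const, Finset.card_range, ← Finset.sum_mul]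
  have hsum : (∑ i ∈ Finset.range p, (i : R)) * (c * ε) = 0 := by
    have h2 : 2 * (p * ((p-1)/2)) = p * (p - 1) := by
      obtain ⟨m, hm⟩ := hodd
      subst hm
      have e1 : (2*m+1-1)/2 = m := by omega
      have e2 : 2*m+1-1 = 2*m := by omega
      rw [e1, e2]
      ring
    have hgauss : (∑ i ∈ Finset.range p, i) = p * ((p-1)/2) := by
      have := Finset.sum_range_id_mul_two p
      omega
    have : (∑ i ∈ Finset.range p, (i : R)) = ((p * ((p-1)/2) : ℕ) : R) := by
      push_cast [← hgauss]
      exact (Nat.cast_sum (R := R) _ _).symm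
    rw [this]
    rw [Nat.cast_mul]
    calc (p : R) * (((p-1)/2 : ℕ) : R) * (c * ε) = (((p-1)/2 : ℕ) : R) * c * (ε * ε) := by
          rw [hεdef]; ring
    _ = 0 := by rw [hε, mul_zero]
  rw [hsum, add_zero]
  simp; exact hεdef.symm

lemma pow_s_key (hp : 1 < p) (s t : ℕ) (hst : s * t ≡ 1 [MOD p]) :
    (((1 + t*p)^s : ℕ) : ZMod (p^2)) = ((1 + p : ℕ) : ZMod (p^2)) := by
  set R := ZMod (p^2)
  set ε : R := (p : R) with hεdef
  have hε : ε * ε = 0 := eps_sq p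
  set c : R := ((t : ℕ) : R) with hcdef
  have hx : (c * ε) * (c * ε) = 0 := by
    calc (c*ε)*(c*ε) = c*c*(ε*ε) := by ring
    _ = 0 := by rw [hε, mul_zero]
  have h1 : ((1 + t*p : ℕ) : R) = 1 + c * ε := by rw [Nat.cast_add, Nat.cast_mul, Nat.cast_one, hcdef, hεdef]
  have hd : ∃ d : ℕ, s * t = 1 + p * d := by
    have h0 : 1 ≤ s * t := by
      rcases Nat.eq_zero_or_pos (s*t) with h | h
      · exfalso
        rw [h] at hst
        have h2 := (Nat.modEq_iff_dvd' (by omega)).mp hst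
        have := Nat.le_of_dvd one_pos (by simpa using h2)
        omega
      · exact h
    have := (Nat.modEq_iff_dvd' h0).mp hst.symm
    obtain ⟨d, hdd⟩ := this
    exact ⟨d, by omega⟩
  obtain ⟨d, hd⟩ := hd
  push_cast
  calc (1 + (t:R) * (p:R))^s = (1 + c * ε)^s := by rw [hcdef, hεdef]
  _ = 1 + (s : R) * (c * ε) := one_add_nilpotent_pow' _ hx s
  _ = 1 + ((s * t : ℕ) : R) * ε := by rw [Nat.cast_mul, hcdef]; ring
  _ = 1 + ((1 + p * d : ℕ) : R) * ε := by rw [hd]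
  _ = 1 + ε + (d:R) * (ε * ε) := by rw [Nat.cast_add, Nat.cast_mul, Nat.cast_one, ← hεdef]; ring
  _ = 1 + (p : R) := by rw [hε]; ring

end ZModCalc

/-- The relators `a^{p^{n-1}}`, `b^p`, `b⁻¹ a b (a^{1+p^{n-2}})⁻¹` defining the
modular group of order `p^n`, with `a = FreeGroup.of true` and `b = FreeGroup.of false`. -/
def modularRels (p n : ℕ) : Set (FreeGroup Bool) :=
  { FreeGroup.of true ^ p ^ (n - 1),
    FreeGroup.of false ^ p,
    (FreeGroup.of false)⁻¹ * FreeGroup.of true * FreeGroup.of false *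
      (FreeGroup.of true ^ (1 + p ^ (n - 2)))⁻¹ }

/-- The group `⟨a, b ∣ a^{p^{n-1}} = 1, b^p = 1, b⁻¹ a b = a^{1+p^{n-2}}⟩`. -/
def ModularGroup (p n : ℕ) : Type := PresentedGroup (modularRels p n)

instance (p n : ℕ) : Group (ModularGroup p n) :=
  inferInstanceAs (Group (PresentedGroup _))

section ModSide

variable (p : ℕ)

/-- images of relators are 1 -/
lemma modular_rel_one (r : FreeGroup Bool) (hr : r ∈ modularRels p 3) :
    PresentedGroup.mk (modularRels p 3) r = 1 :=
  (QuotientGroup.eq_one_iff _).mpr (Subgroup.subset_normalClosure hr)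

noncomputable abbrev mA : ModularGroup p 3 := PresentedGroup.of (rels := modularRels p 3) true
noncomputable abbrev mB : ModularGroup p 3 := PresentedGroup.of (rels := modularRels p 3) false

lemma mrel1 : (mA p) ^ (p ^ 2) = 1 := by
  have := modular_rel_one p (FreeGroup.of true ^ p ^ (3-1)) (by left; rfl)
  rw [map_pow] at this
  exact this

lemma mrel2 : (mB p) ^ p = 1 := by
  have := modular_rel_one p (FreeGroup.of false ^ p) (by right; left; rfl)
  rw [map_pow] at this
  exact this

lemma mrel3 : (mB p)⁻¹ * mA p * mB p = (mA p) ^ (1 + p) := by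
  have := modular_rel_one p
    ((FreeGroup.of false)⁻¹ * FreeGroup.of true * FreeGroup.of false *
      (FreeGroup.of true ^ (1 + p ^ (3 - 2)))⁻¹) (by right; right; rfl)
  simp only [map_mul, map_inv, map_pow] at this
  have h2 := mul_eq_one_iff_eq_inv.mp this
  rw [inv_inv, show p ^ (3 - 2) = p by norm_num] at h2
  exact h2

lemma modular_finite_card (hp : p.Prime) :
    Finite (ModularGroup p 3) ∧ Nat.card (ModularGroup p 3) ≤ p ^ 3 := by
  have hp1 : 1 < p := hp.one_lt
  set a := mA p
  set b := mB p
  have r1 : a ^ (p^2) = 1 := mrel1 p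
  have r2 : b ^ p = 1 := mrel2 p
  have r3 : b⁻¹ * a * b = a ^ (1+p) := mrel3 p
  have hafin : IsOfFinOrder a := isOfFinOrder_iff_pow_eq_one.mpr ⟨p^2, by positivity, r1⟩
  have hbfin : IsOfFinOrder b := isOfFinOrder_iff_pow_eq_one.mpr ⟨p, by omega, r2⟩
  set N : Subgroup (ModularGroup p 3) := Subgroup.zpowers a with hN
  haveI hNfin : Finite N := by
    have := (finite_zpowers (a := a)).mpr hafin
    exact this.to_subtype
  -- b conjugates a into N, both ways
  have hback : b * a * b⁻¹ = a ^ ((1+p) ^ (p-1)) := by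
    refine conj_back a b (1+p) p (by omega) r3 ?_
    rw [r2]
    exact Commute.one_left a
  have hbmem : b ∈ Subgroup.normalizer N := by
    rw [Subgroup.mem_normalizer_iff]
    intro h
    constructor
    · rintro ⟨z, rfl⟩
      refine ⟨z * ((1+p) ^ (p-1) : ℕ), ?_⟩
      have := conj_zpow' a b⁻¹ z
      rw [inv_inv] at this
      rw [this, hback, ← zpow_natCast, ← zpow_mul, mul_comm (((1+p)^(p-1) : ℕ) : ℤ) z]
    · rintro ⟨z, hz⟩
      have hz' : a ^ z = b * h * b⁻¹ := hz
      have : h = b⁻¹ * a ^ z * b := by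
        rw [hz']; group
      rw [this, conj_zpow' a b z, r3, ← zpow_natCast, ← zpow_mul]
      exact ⟨_, rfl⟩
  have hNtop : Subgroup.normalizer (N : Set (ModularGroup p 3)) = ⊤ := by
    rw [Subgroup.eq_top_iff']
    intro x
    refine PresentedGroup.generated_by _ _ ?_ x
    intro j
    cases j
    · exact hbmem
    · exact Subgroup.le_normalizer (Subgroup.mem_zpowers a)
  haveI hNnorm : N.Normal := Subgroup.normalizer_eq_top_iff.mp hNtop
  -- quotient
  set π := QuotientGroup.mk' N
  have hπa : π a = 1 := (QuotientGroup.eq_one_iff _).mpr (Subgroup.mem_zpowers a)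
  have hπtop : Subgroup.zpowers (π b) = ⊤ := by
    rw [Subgroup.eq_top_iff']
    intro x
    obtain ⟨y, rfl⟩ := QuotientGroup.mk'_surjective N x
    refine PresentedGroup.generated_by _ ((Subgroup.zpowers (π b)).comap π) ?_ y
    intro j
    cases j
    · exact Subgroup.mem_zpowers (π b)
    · have h1 : π (PresentedGroup.of (rels := modularRels p 3) true) = 1 := hπa
      refine Subgroup.mem_comap.mpr ?_
      exact h1 ▸ (Subgroup.zpowers (π b)).one_mem
  have hπbfin : IsOfFinOrder (π b) :=
    isOfFinOrder_iff_pow_eq_one.mpr ⟨p, by omega, by rw [← map_pow, r2, map_one]⟩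
  haveI hQfin : Finite (ModularGroup p 3 ⧸ N) := by
    have h1 : ((Subgroup.zpowers (π b) : Subgroup (ModularGroup p 3 ⧸ N)) : Set (ModularGroup p 3 ⧸ N)).Finite :=
      (finite_zpowers).mpr hπbfin
    rw [hπtop, Subgroup.coe_top] at h1
    exact Set.finite_univ_iff.mp h1
  haveI hGfin : Finite (ModularGroup p 3) :=
    Finite.of_equiv _ (Subgroup.groupEquivQuotientProdSubgroup (s := N)).symm
  refine ⟨hGfin, ?_⟩
  have hcard := Subgroup.card_eq_card_quotient_mul_card_subgroup N
  have hcardN : Nat.card N ≤ p ^ 2 := by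
    rw [Nat.card_zpowers]
    exact Nat.le_of_dvd (by positivity) (orderOf_dvd_of_pow_eq_one r1)
  have hcardQ : Nat.card (ModularGroup p 3 ⧸ N) ≤ p := by
    have : Nat.card (ModularGroup p 3 ⧸ N) = orderOf (π b) := by
      rw [← Nat.card_zpowers, hπtop]
      exact Subgroup.card_top.symm
    rw [this]
    exact Nat.le_of_dvd (by omega) (orderOf_dvd_of_pow_eq_one (by rw [← map_pow, r2, map_one]))
  calc Nat.card (ModularGroup p 3) = Nat.card (ModularGroup p 3 ⧸ N) * Nat.card N := hcard
  _ ≤ p * p ^ 2 := Nat.mul_le_mul hcardQ hcardN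
  _ = p ^ 3 := by ring

end ModSide

/-- a nonabelian group of order `p³` (`p` an odd prime) containing an element of
order `p²` is isomorphic to `⟨a, b ∣ a^{p²} = 1, b^p = 1, b⁻¹ a b = a^{1+p}⟩`. -/
theorem nonabelian_p_cubed_iso_modular
    (p : ℕ) (hp : p.Prime) (hodd : Odd p)
    (G : Type*) [Group G] (hcard : Nat.card G = p ^ 3)
    (hnonab : ∃ a b : G, a * b ≠ b * a)
    (hg : ∃ g : G, orderOf g = p ^ 2) :
    Nonempty (G ≃* ModularGroup p 3) := by
  obtain ⟨g, hg⟩ := hg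
  haveI : Fact p.Prime := ⟨hp⟩
  have hp1 : 1 < p := hp.one_lt
  haveI hfinG : Finite G := Nat.finite_of_card_ne_zero (by rw [hcard]; positivity)
  set A : Subgroup G := Subgroup.zpowers g with hA
  have hgfin : IsOfFinOrder g := by
    rw [← orderOf_pos_iff, hg]; positivity
  have hcardA : Nat.card A = p ^ 2 := by rw [hA, Nat.card_zpowers, hg]
  have hAindex : A.index = p := by
    have h1 := Subgroup.card_mul_index A
    rw [hcardA, hcard] at h1
    have h2 : p ^ 2 * A.index = p ^ 2 * p := by rw [h1]; ring
    exact Nat.eq_of_mul_eq_mul_left (by positivity) h2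
  have maxl : ∀ H : Subgroup G, A ≤ H → A ≠ H → H = ⊤ := by
    intro H hle hne
    have hdvd : H.index ∣ p := hAindex ▸ Subgroup.index_dvd_of_le hle
    rcases (Nat.Prime.eq_one_or_self_of_dvd hp _ hdvd) with h1 | h1
    · exact Subgroup.index_eq_one.mp h1
    · exfalso
      apply hne
      refine Subgroup.eq_of_le_of_card_ge hle ?_
      have h2 := Subgroup.card_mul_index H
      rw [h1, hcard] at h2
      have h3 : Nat.card H = p ^ 2 := by
        have h4 : Nat.card H * p = p ^ 2 * p := by rw [h2]; ring
        exact Nat.eq_of_mul_eq_mul_right (by omega) h4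
      rw [h3, hcardA]
  have hpG : IsPGroup p G := IsPGroup.of_card hcard
  haveI : Group.IsNilpotent G := hpG.isNilpotent
  have hnc : NormalizerCondition G := normalizerCondition_of_isNilpotent
  have hAne : A ≠ ⊤ := by
    intro h
    rw [h, Subgroup.card_top, hcard] at hcardA
    have := Nat.pow_lt_pow_right hp1 (show 2 < 3 by omega)
    omega
  have hlt : A < Subgroup.normalizer A := hnc A (lt_top_iff_ne_top.mpr hAne)
  have hAnormal : A.Normal := Subgroup.normalizer_eq_top_iff.mp (maxl _ Subgroup.le_normalizer hlt.ne)
  haveI := hAnormal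
  have hnocomm : ∀ c : G, c ∉ A → ¬ (g * c = c * g) := by
    intro c hc hcom
    have hgC : g ∈ Subgroup.centralizer {g} :=
      Subgroup.mem_centralizer_singleton_iff.mpr rfl
    have hAC : A ≤ Subgroup.centralizer {g} := Subgroup.zpowers_le.mpr hgC
    have hcC : c ∈ Subgroup.centralizer {g} := Subgroup.mem_centralizer_singleton_iff.mpr hcom.symm
    have hCtop : Subgroup.centralizer {g} = ⊤ := maxl _ hAC (fun h => hc (h ▸ hcC))
    have hgcenter : g ∈ Subgroup.center G := by
      rw [Subgroup.mem_center_iff]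
      intro x
      have hx : x ∈ Subgroup.centralizer {g} := hCtop ▸ Subgroup.mem_top x
      exact Subgroup.mem_centralizer_singleton_iff.mp hx
    have hAcenter : A ≤ Subgroup.center G := Subgroup.zpowers_le.mpr hgcenter
    have hcentertop : Subgroup.center G ≠ ⊤ := by
      intro h
      obtain ⟨x, y, hxy⟩ := hnonab
      apply hxy
      have hx : x ∈ Subgroup.center G := h ▸ Subgroup.mem_top x
      exact (Subgroup.mem_center_iff.mp hx y).symm
    have hceq : A = Subgroup.center G := by
      by_contra h
      exact hcentertop (maxl _ hAcenter h)
    haveI : IsCyclic (G ⧸ Subgroup.center G) := by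
      apply isCyclic_of_prime_card (p := p)
      rw [← Subgroup.index_eq_card, ← hceq, hAindex]
    obtain ⟨x, y, hxy⟩ := hnonab
    refine hxy (commutative_of_cyclic_center_quotient (QuotientGroup.mk' (Subgroup.center G)) ?_ x y)
    rw [QuotientGroup.ker_mk']
  obtain ⟨c, hc⟩ : ∃ c : G, c ∉ A := by
    by_contra h
    push_neg at h
    exact hAne ((Subgroup.eq_top_iff' A).mpr h)
  set π := QuotientGroup.mk' A with hπ
  have hcardQ : Nat.card (G ⧸ A) = p := by rw [← Subgroup.index_eq_card, hAindex]
  have hQpow : ∀ x : G, (π x) ^ p = 1 := by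
    intro x; rw [← hcardQ]; exact pow_card_eq_one'
  have hmemA_pow : ∀ x : G, x ^ p ∈ A := by
    intro x
    have h1 := hQpow x
    rw [← map_pow] at h1
    exact (QuotientGroup.eq_one_iff _).mp h1
  have hconjA : c⁻¹ * g * c ∈ A := by
    have h1 := hAnormal.conj_mem g (Subgroup.mem_zpowers g) c⁻¹
    simpa [mul_assoc] using h1
  obtain ⟨k₀, hk₀⟩ : ∃ n : ℕ, g ^ n = c⁻¹ * g * c := by
    obtain ⟨n, hn⟩ := hgfin.mem_powers_iff_mem_zpowers.mpr hconjA
    exact ⟨n, hn⟩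
  set k := k₀ % p ^ 2 with hk
  have hgk : c⁻¹ * g * c = g ^ k := by rw [hk, ← hg, pow_mod_orderOf, hk₀]
  have hklt : k < p ^ 2 := Nat.mod_lt _ (by positivity)
  have hmod : ∀ m n : ℕ, g ^ m = g ^ n ↔ m ≡ n [MOD p ^ 2] := by
    intro m n; rw [pow_eq_pow_iff_modEq, hg]
  have hcpcomm : Commute (c ^ p) g := by
    obtain ⟨z, hz⟩ := hmemA_pow c
    rw [← hz]; exact ((Commute.refl g).zpow_left z)
  have hkp : k ^ p ≡ 1 [MOD p ^ 2] := by
    have h1 := conj_iterate g c k hgk p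
    have h2 : (c ^ p)⁻¹ * g * c ^ p = g := by
      rw [mul_assoc, ← hcpcomm.eq, ← mul_assoc, inv_mul_cancel, one_mul]
    rw [h2] at h1
    exact ((hmod 1 (k ^ p)).mp (by rw [pow_one]; exact h1)).symm
  have hkne1 : ¬ (k ≡ 1 [MOD p ^ 2]) := by
    intro h
    have h1 : c⁻¹ * g * c = g := by rw [hgk, (hmod k 1).mpr h, pow_one]
    have hcom : g * c = c * g := by
      calc g * c = c * (c⁻¹ * g * c) := by group
      _ = c * g := by rw [h1]
    exact hnocomm c hc hcom
  have hk1p : k ≡ 1 [MOD p] := by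
    have h1 : k ^ p ≡ 1 [MOD p] := Nat.ModEq.of_dvd (dvd_pow_self p (by omega)) hkp
    have h2 : ((k : ZMod p)) ^ p = 1 := by
      have h3 := (ZMod.natCast_eq_natCast_iff _ _ _).mpr h1
      push_cast at h3
      exact h3
    have h3 : (k : ZMod p) = 1 := by rw [← ZMod.pow_card (k : ZMod p), h2]
    refine (ZMod.natCast_eq_natCast_iff _ _ _).mp ?_
    rw [h3, Nat.cast_one]
  have hkpos : 1 ≤ k := by
    rcases Nat.eq_zero_or_pos k with h | h
    · exfalso
      rw [h] at hk1p
      have h1 := (Nat.modEq_iff_dvd' (by omega)).mp hk1p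
      have := Nat.le_of_dvd one_pos (by simpa using h1)
      omega
    · exact h
  obtain ⟨t, ht⟩ : ∃ t, k = 1 + t * p := by
    obtain ⟨t, ht⟩ := (Nat.modEq_iff_dvd' hkpos).mp hk1p.symm
    refine ⟨t, ?_⟩
    have hmc : t * p = p * t := Nat.mul_comm t p
    omega
  have htlt : t < p := by
    by_contra hcon
    push_neg at hcon
    have h1 : p * p ≤ t * p := Nat.mul_le_mul_right p hcon
    have h2 : p ^ 2 ≤ t * p := by rw [pow_two]; exact h1
    omega
  have htne : t ≠ 0 := by
    intro h
    rw [h, zero_mul, add_zero] at ht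
    exact hkne1 (by rw [ht])
  have htZ : (t : ZMod p) ≠ 0 := by
    rw [Ne, ZMod.natCast_eq_zero_iff]
    intro hdvd
    have := Nat.le_of_dvd (by omega) hdvd
    omega
  set s := ((t : ZMod p)⁻¹).val with hs
  have hst : s * t ≡ 1 [MOD p] := by
    have h1 : ((s * t : ℕ) : ZMod p) = 1 := by
      push_cast
      rw [hs, ZMod.natCast_val, ZMod.cast_id]
      exact inv_mul_cancel₀ htZ
    refine (ZMod.natCast_eq_natCast_iff _ _ _).mp ?_
    rw [h1, Nat.cast_one]
  have hsnd : ¬ p ∣ s := by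
    intro hdvd
    have h0 : s * t ≡ 0 [MOD p] := (Nat.modEq_zero_iff_dvd).mpr (hdvd.mul_right t)
    have h1 := h0.symm.trans hst
    have h2 := (Nat.modEq_iff_dvd' (by omega)).mp h1
    have := Nat.le_of_dvd one_pos (by simpa using h2)
    omega
  set b₁ := c ^ s with hb₁
  have hordπc : orderOf (π c) = p := by
    have hπc : π c ≠ 1 := by
      rw [Ne, QuotientGroup.mk'_apply, QuotientGroup.eq_one_iff]
      exact hc
    have hdvd : orderOf (π c) ∣ p := orderOf_dvd_of_pow_eq_one (hQpow c)
    rcases (Nat.Prime.eq_one_or_self_of_dvd hp _ hdvd) with h | h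
    · exact absurd (orderOf_eq_one_iff.mp h) hπc
    · exact h
  have hb₁A : b₁ ∉ A := by
    intro hmem
    have h1 : (π c) ^ s = 1 := by
      rw [← map_pow]
      exact (QuotientGroup.eq_one_iff _).mpr hmem
    exact hsnd (hordπc ▸ orderOf_dvd_of_pow_eq_one h1)
  have hconj₁ : b₁⁻¹ * g * b₁ = g ^ (1 + p) := by
    have h1 := conj_iterate g c k hgk s
    rw [hb₁, h1, hmod]
    have h2 := pow_s_key p hp1 s t hst
    rw [← ht] at h2
    exact (ZMod.natCast_eq_natCast_iff _ _ _).mp h2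
  obtain ⟨m₀, hm₀⟩ : ∃ n : ℕ, g ^ n = b₁ ^ p := by
    obtain ⟨n, hn⟩ := hgfin.mem_powers_iff_mem_zpowers.mpr (hmemA_pow b₁)
    exact ⟨n, hn⟩
  have hb₁pcomm : Commute (b₁ ^ p) g := by
    rw [← hm₀]; exact ((Commute.refl g).pow_left m₀)
  have hpm : p ∣ m₀ := by
    have h1 : b₁⁻¹ * g ^ m₀ * b₁ = g ^ (m₀ * (1+p)) := by
      rw [conj_pow', hconj₁, ← pow_mul, mul_comm (1+p) m₀]
    have h2 : b₁⁻¹ * g ^ m₀ * b₁ = g ^ m₀ := by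
      rw [hm₀]; group
    have h3 : m₀ * (1+p) ≡ m₀ [MOD p^2] := (hmod _ _).mp (h1.symm.trans h2)
    have h4 := (Nat.modEq_iff_dvd' (by nlinarith)).mp h3.symm
    have h5 : m₀ * (1+p) - m₀ = m₀ * p := by
      have : m₀ * (1+p) = m₀ + m₀ * p := by ring
      omega
    rw [h5, pow_two] at h4
    exact (Nat.mul_dvd_mul_iff_right (show 0 < p by omega)).mp h4
  set m₁ := m₀ / p with hm₁
  have hm₀eq : m₀ = p * m₁ := (Nat.mul_div_cancel' hpm).symm
  set w := (1+p) ^ (p-1) with hw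
  have hback : b₁ * g * b₁⁻¹ = g ^ w := conj_back g b₁ (1+p) p (by omega) hconj₁ hb₁pcomm
  set r := p - m₁ % p with hr
  set b := g ^ r * b₁ with hbdef
  have hconjb : b⁻¹ * g * b = g ^ (1 + p) := by
    rw [hbdef]
    have h1 : (g ^ r * b₁)⁻¹ * g * (g ^ r * b₁) = b₁⁻¹ * ((g^r)⁻¹ * g * g^r) * b₁ := by
      group
    have h2 : (g^r)⁻¹ * g * g^r = g := by group
    rw [h1, h2, hconj₁]
  have hxconj : b₁ * g ^ r * b₁⁻¹ = (g ^ r) ^ w := by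
    have h1 := conj_pow' g b₁⁻¹ r
    rw [inv_inv] at h1
    rw [h1, hback, ← pow_mul, mul_comm w r, pow_mul]
  have hre : p ∣ (r + m₁) := by
    refine ⟨m₁ / p + 1, ?_⟩
    have h1 := Nat.mod_add_div m₁ p
    have h2 : m₁ % p < p := Nat.mod_lt _ (by omega)
    have h3 : p * (m₁/p + 1) = p * (m₁/p) + p := by ring
    omega
  have hbp1 : b ^ p = 1 := by
    have h1 := prod_pow_formula (g ^ r) b₁ w hxconj p
    rw [hbdef, h1, ← pow_mul, ← hm₀, ← pow_add]
    have hzero : g ^ (r * (∑ i ∈ Finset.range p, w ^ i) + m₀) = g ^ 0 := by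
      rw [hmod]
      refine (ZMod.natCast_eq_natCast_iff _ _ _).mp ?_
      rw [Nat.cast_add, Nat.cast_mul, hw, geom_sum_key p hp hodd, hm₀eq, Nat.cast_mul]
      obtain ⟨e, he⟩ := hre
      have h2 : (r : ZMod (p^2)) * p + (p : ZMod (p^2)) * m₁
          = ((p * (r + m₁) : ℕ) : ZMod (p^2)) := by push_cast; ring
      rw [h2, he]
      have h3 : ((p * (p * e) : ℕ) : ZMod (p^2)) = ((p^2 * e : ℕ) : ZMod (p^2)) := by
        congr 1; ring
      rw [h3, Nat.cast_mul, ZMod.natCast_self, zero_mul, Nat.cast_zero]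
    rw [hzero, pow_zero]
  have hbnotA : b ∉ A := by
    intro hmem
    apply hb₁A
    have h1 : b₁ = (g ^ r)⁻¹ * b := by rw [hbdef]; group
    rw [h1]
    exact A.mul_mem (A.inv_mem (A.pow_mem (Subgroup.mem_zpowers g) r)) hmem
  -- build the homomorphism from the presented group
  set f : Bool → G := fun x => bif x then g else b with hf
  have hrels : ∀ rl ∈ modularRels p 3, FreeGroup.lift f rl = 1 := by
    intro rl hrl
    simp only [modularRels, Set.mem_insert_iff, Set.mem_singleton_iff] at hrl
    rcases hrl with rfl | rfl | rfl
    · rw [map_pow, FreeGroup.lift_apply_of]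
      show g ^ p ^ 2 = 1
      rw [← hg]; exact pow_orderOf_eq_one g
    · rw [map_pow, FreeGroup.lift_apply_of]
      exact hbp1
    · simp only [map_mul, map_inv, map_pow, FreeGroup.lift_apply_of]
      show b⁻¹ * g * b * (g ^ (1 + p ^ 1))⁻¹ = 1
      rw [pow_one, hconjb, mul_inv_cancel]
  let φ : ModularGroup p 3 →* G := PresentedGroup.toGroup hrels
  have hφa : φ (mA p) = g := PresentedGroup.toGroup.of hrels
  have hφb : φ (mB p) = b := PresentedGroup.toGroup.of hrels
  have hrange : φ.range = ⊤ := by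
    apply maxl
    · rw [hA]
      refine Subgroup.zpowers_le.mpr ?_
      exact ⟨mA p, hφa⟩
    · intro h
      apply hbnotA
      rw [h]
      exact ⟨mB p, hφb⟩
  have hsurj : Function.Surjective φ := MonoidHom.range_eq_top.mp hrange
  obtain ⟨hMfin, hMcard⟩ := modular_finite_card p hp
  have hcard_ge : p ^ 3 ≤ Nat.card (ModularGroup p 3) := by
    rw [← hcard]
    exact Nat.card_le_card_of_surjective φ hsurj
  have hbij : Function.Bijective φ :=
    (Nat.bijective_iff_surjective_and_card φ).mpr
      ⟨hsurj, by rw [le_antisymm hMcard hcard_ge, hcard]⟩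
  exact ⟨(MulEquiv.ofBijective φ hbij).symm⟩
end

section
/- Let K be an imaginary quadratic field other than ℚ(√−3) and ℚ(i) (so O_K^× = {±1}), let p be an odd prime, and let 𝔮 be a prime ideal of O_K not above p with p ∣ N(𝔮) − 1. If p does not divide the class number of K, then for every n ≥ 1 the p-Sylow subgroup of the ray class group Cl_K(𝔮^n) is cyclic and nontrivial; in particular Cl_K(𝔮^n) has a unique subgroup isomorphic to ℤ/pℤ. -/
set_option synthInstance.maxHeartbeats 1000000
set_option maxHeartbeats 2000000

open NumberField Module

private lemma isCyclic_map_aux {G H : Type*} [Group G] [Group H] (f : G →* H)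
    (S : Subgroup G) (hS : IsCyclic S) : IsCyclic (S.map f) := by
  haveI := hS
  exact isCyclic_of_surjective (f.subgroupMap S) (f.subgroupMap_surjective S)

/-- let `K` be an imaginary quadratic field with unit group `{±1}` (i.e.
`K ≠ ℚ(i), ℚ(√-3)`), `p` an odd prime not dividing the class number of `K`, and `𝔮` a
prime of `K` not above `p` with `p ∣ N(𝔮) - 1`.  Then for every `n ≥ 1` and every
realization `C` of the ray class group `Cl_K(𝔮^n)` — i.e. any abelian group sitting in the
exact sequence `(𝓞 K)ˣ → (𝓞 K/𝔮^n)ˣ → C → Cl_K → 1` — the `p`-Sylow subgroup of `C` is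
cyclic and nontrivial; in particular `C` has a unique subgroup of order `p`
(necessarily isomorphic to `ℤ/pℤ`). -/
theorem ray_class_group_unique_subgroup_p (K : Type*) [Field K] [NumberField K]
    (hdeg : finrank ℚ K = 2) (himag : ∀ v : InfinitePlace K, v.IsComplex)
    (hunits : ∀ u : (𝓞 K)ˣ, u = 1 ∨ u = -1)
    (p : ℕ) (hp : p.Prime) (hodd : Odd p)
    (hclass : ¬ p ∣ Nat.card (ClassGroup (𝓞 K)))
    (𝔮 : Ideal (𝓞 K)) (hmax : 𝔮.IsMaximal) (hnotp : (p : 𝓞 K) ∉ 𝔮)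
    (hdvd : p ∣ Ideal.absNorm 𝔮 - 1)
    (n : ℕ) (hn : 1 ≤ n)
    (C : Type*) [CommGroup C]
    (g : (𝓞 K ⧸ 𝔮 ^ n)ˣ →* C) (h : C →* ClassGroup (𝓞 K))
    (hsurj : Function.Surjective h) (hex1 : h.ker = g.range)
    (hex2 : g.ker = (Units.map (Ideal.Quotient.mk (𝔮 ^ n)).toMonoidHom).range) :
    (∀ P : Sylow p C, IsCyclic P ∧ Nontrivial P) ∧
    ∃! H : Subgroup C, Nat.card H = p := by
  haveI : Fact p.Prime := ⟨hp⟩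
  haveI := hmax.isPrime
  have hqbot : 𝔮 ≠ ⊥ :=
    Ring.ne_bot_of_isMaximal_of_not_isField hmax (RingOfIntegers.not_isField K)
  have hqnbot : 𝔮 ^ n ≠ ⊥ := by
    intro hcon
    obtain ⟨x, hx, hx0⟩ := (Submodule.ne_bot_iff 𝔮).mp hqbot
    have hxn : x ^ n ∈ 𝔮 ^ n := Ideal.pow_mem_pow hx n
    rw [hcon, Ideal.mem_bot] at hxn
    exact hx0 ((pow_eq_zero_iff (by omega)).mp hxn)
  letI : Fintype (𝓞 K ⧸ 𝔮 ^ n) := @Fintype.ofFinite _ (Ideal.finiteQuotientOfFreeOfNeBot _ hqnbot)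
  letI : Fintype (𝓞 K ⧸ 𝔮) := @Fintype.ofFinite _ (Ideal.finiteQuotientOfFreeOfNeBot _ hqbot)
  letI : Field (𝓞 K ⧸ 𝔮) := Ideal.Quotient.field 𝔮
  set π : (𝓞 K ⧸ 𝔮 ^ n) →+* (𝓞 K ⧸ 𝔮) :=
    Ideal.Quotient.factor (Ideal.pow_le_self (by omega) : 𝔮 ^ n ≤ 𝔮) with hπ
  -- `p` is a unit in the quotient ring
  have hpu : IsUnit ((p : ℕ) : 𝓞 K ⧸ 𝔮 ^ n) := by
    obtain ⟨y, i, hi, hyi⟩ := hmax.exists_inv hnotp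
    have hcop : IsCoprime (p : 𝓞 K) i := ⟨y, 1, by rw [one_mul]; exact hyi⟩
    obtain ⟨a, b, hab⟩ := hcop.pow_right (n := n)
    have h0 : Ideal.Quotient.mk (𝔮 ^ n) (i ^ n) = 0 :=
      Ideal.Quotient.eq_zero_iff_mem.mpr (Ideal.pow_mem_pow hi n)
    refine IsUnit.of_mul_eq_one (Ideal.Quotient.mk (𝔮 ^ n) a) ?_
    have h1 := congrArg (Ideal.Quotient.mk (𝔮 ^ n)) hab
    rw [map_add, map_mul, map_mul, h0, mul_zero, add_zero, map_one, map_natCast] at h1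
    rw [mul_comm] at h1
    exact h1
  -- elements of the kernel of `π` are nilpotent
  have hker : ∀ t : 𝓞 K ⧸ 𝔮 ^ n, π t = 0 → t ^ n = 0 := by
    intro t ht
    obtain ⟨x, rfl⟩ := Ideal.Quotient.mk_surjective t
    rw [hπ, Ideal.Quotient.factor_mk] at ht
    rw [← map_pow, Ideal.Quotient.eq_zero_iff_mem]
    exact Ideal.pow_mem_pow (Ideal.Quotient.eq_zero_iff_mem.mp ht) n
  -- no element of order p in the kernel of the reduction of unit groups
  have hA : ∀ u : (𝓞 K ⧸ 𝔮 ^ n)ˣ, Units.map π.toMonoidHom u = 1 → u ^ p = 1 → u = 1 := by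
    intro u hu hup
    have hval : π (u : 𝓞 K ⧸ 𝔮 ^ n) = 1 := by
      have := congrArg Units.val hu
      simpa using this
    have htnil : IsNilpotent ((u : 𝓞 K ⧸ 𝔮 ^ n) - 1) :=
      ⟨n, hker _ (by rw [map_sub, hval, map_one, sub_self])⟩
    have hgeom : (∑ i ∈ Finset.range p, (u : 𝓞 K ⧸ 𝔮 ^ n) ^ i) * ((u : 𝓞 K ⧸ 𝔮 ^ n) - 1) = 0 := by
      rw [geom_sum_mul, ← Units.val_pow_eq_pow_val, hup, Units.val_one, sub_self]
    have hdvd2 : ((u : 𝓞 K ⧸ 𝔮 ^ n) - 1) ∣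
        (∑ i ∈ Finset.range p, (u : 𝓞 K ⧸ 𝔮 ^ n) ^ i) - (p : 𝓞 K ⧸ 𝔮 ^ n) := by
      have hsum : (∑ i ∈ Finset.range p, (u : 𝓞 K ⧸ 𝔮 ^ n) ^ i) - (p : 𝓞 K ⧸ 𝔮 ^ n)
          = ∑ i ∈ Finset.range p, ((u : 𝓞 K ⧸ 𝔮 ^ n) ^ i - 1) := by
        rw [Finset.sum_sub_distrib, Finset.sum_const, Finset.card_range, nsmul_eq_mul, mul_one]
      rw [hsum]
      refine Finset.dvd_sum fun i _ => ?_
      simpa using sub_dvd_pow_sub_pow ((u : 𝓞 K ⧸ 𝔮 ^ n)) 1 i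
    obtain ⟨w, hw⟩ := hdvd2
    have hvunit : IsUnit (∑ i ∈ Finset.range p, (u : 𝓞 K ⧸ 𝔮 ^ n) ^ i) := by
      have hrw : (∑ i ∈ Finset.range p, (u : 𝓞 K ⧸ 𝔮 ^ n) ^ i)
          = (p : 𝓞 K ⧸ 𝔮 ^ n) + ((u : 𝓞 K ⧸ 𝔮 ^ n) - 1) * w := by
        rw [← hw]; ring
      rw [hrw]
      exact IsNilpotent.isUnit_add_left_of_commute
        ((Commute.all _ w).isNilpotent_mul_right htnil) hpu (Commute.all _ _)
    have ht0 : (u : 𝓞 K ⧸ 𝔮 ^ n) - 1 = 0 := by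
      obtain ⟨V, hV⟩ := hvunit
      rw [← hV] at hgeom
      exact (Units.mul_right_eq_zero V).mp hgeom
    exact Units.ext (by rwa [sub_eq_zero] at ht0)
  have hA' : ∀ (k : ℕ) (u : (𝓞 K ⧸ 𝔮 ^ n)ˣ),
      Units.map π.toMonoidHom u = 1 → u ^ p ^ k = 1 → u = 1 := by
    intro k
    induction k with
    | zero => intro u _ h1; simpa using h1
    | succ k ih =>
      intro u hu hup
      have hv : Units.map π.toMonoidHom (u ^ p ^ k) = 1 := by rw [map_pow, hu, one_pow]
      have h1 : u ^ p ^ k = 1 := hA _ hv (by rw [← pow_mul, ← pow_succ]; exact hup)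
      exact ih u hu h1
  -- every p-subgroup of the unit group of the quotient ring is cyclic
  have hScyc : ∀ S : Subgroup (𝓞 K ⧸ 𝔮 ^ n)ˣ, IsPGroup p S → IsCyclic S := by
    intro S hS
    refine isCyclic_of_subgroup_isDomain (R := 𝓞 K ⧸ 𝔮)
      ((Units.coeHom _).comp ((Units.map π.toMonoidHom).comp S.subtype)) ?_
    rw [injective_iff_map_eq_one]
    intro a ha
    have h1 : Units.map π.toMonoidHom (a : (𝓞 K ⧸ 𝔮 ^ n)ˣ) = 1 := Units.ext (by exact ha)
    obtain ⟨k, hk⟩ := hS a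
    have hk' : (a : (𝓞 K ⧸ 𝔮 ^ n)ˣ) ^ p ^ k = 1 := by
      have := congrArg (Subtype.val) hk
      simpa using this
    exact Subtype.ext (hA' k _ h1 hk')
  -- the reduction of unit groups is surjective
  have hπs : Function.Surjective π := by
    intro z
    obtain ⟨a, rfl⟩ := Ideal.Quotient.mk_surjective z
    exact ⟨Ideal.Quotient.mk _ a, by rw [hπ, Ideal.Quotient.factor_mk]⟩
  have hUsurj : Function.Surjective (Units.map π.toMonoidHom) := by
    intro v
    obtain ⟨r, hr⟩ := hπs (v : 𝓞 K ⧸ 𝔮)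
    obtain ⟨s, hs⟩ := hπs ((v⁻¹ : _ˣ) : 𝓞 K ⧸ 𝔮)
    have h1 : π (r * s) = 1 := by rw [map_mul, hr, hs, Units.mul_inv]
    have hnil : IsNilpotent (r * s - 1) := ⟨n, hker _ (by rw [map_sub, h1, map_one, sub_self])⟩
    have hu : IsUnit (r * s) := by
      have := hnil.isUnit_add_one
      simpa using this
    have hur : IsUnit r := isUnit_of_mul_isUnit_left hu
    obtain ⟨u, rfl⟩ := hur
    exact ⟨u, Units.ext (by simpa using hr)⟩
  -- counting
  have hcardF : Nat.card (𝓞 K ⧸ 𝔮) = Ideal.absNorm 𝔮 := by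
    rw [Ideal.absNorm_apply, Submodule.cardQuot_apply]
  have hpFx : p ∣ Nat.card (𝓞 K ⧸ 𝔮)ˣ := by
    rw [Nat.card_units, hcardF]; exact hdvd
  have hpRx : p ∣ Nat.card (𝓞 K ⧸ 𝔮 ^ n)ˣ :=
    dvd_trans hpFx (Subgroup.card_dvd_of_surjective _ hUsurj)
  -- the kernel of g consists of elements of order dividing 2
  have hker2 : ∀ x ∈ g.ker, x ^ 2 = 1 := by
    intro x hx
    rw [hex2] at hx
    obtain ⟨u, rfl⟩ := hx
    have hu2 : u ^ 2 = 1 := by rcases hunits u with h1 | h1 <;> simp [h1]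
    rw [← map_pow, hu2, map_one]
  have hp2 : ¬ p ∣ 2 := by
    intro hd
    have := (Nat.prime_dvd_prime_iff_eq hp Nat.prime_two).mp hd
    rw [this] at hodd
    rcases hodd with ⟨m, hm⟩
    omega
  have hpker : ¬ p ∣ Nat.card g.ker := by
    intro hdk
    obtain ⟨x, hx⟩ := exists_prime_orderOf_dvd_card' p hdk
    have hx2 : x ^ 2 = 1 := Subtype.ext (by
      rw [SubmonoidClass.coe_pow]
      exact hker2 _ x.2)
    have hdvd2 : orderOf x ∣ 2 := orderOf_dvd_of_pow_eq_one hx2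
    rw [hx] at hdvd2
    exact hp2 hdvd2
  have hcardRx : Nat.card (𝓞 K ⧸ 𝔮 ^ n)ˣ
      = Nat.card ((𝓞 K ⧸ 𝔮 ^ n)ˣ ⧸ g.ker) * Nat.card g.ker :=
    (Nat.card_congr Subgroup.groupEquivQuotientProdSubgroup).trans (Nat.card_prod _ _)
  have hrange : Nat.card ((𝓞 K ⧸ 𝔮 ^ n)ˣ ⧸ g.ker) = Nat.card g.range :=
    Nat.card_congr (QuotientGroup.quotientKerEquivRange g).toEquiv
  have hprange : p ∣ Nat.card g.range := by
    rw [hcardRx, hrange] at hpRx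
    rcases (Nat.Prime.dvd_mul hp).mp hpRx with h1 | h1
    · exact h1
    · exact absurd h1 hpker
  -- finiteness of C
  haveI hfr : Finite g.range := Finite.of_equiv _ (QuotientGroup.quotientKerEquivRange g).toEquiv
  haveI : Finite h.ker := by rw [hex1]; exact hfr
  haveI : Finite (C ⧸ h.ker) :=
    Finite.of_equiv _ (QuotientGroup.quotientKerEquivOfSurjective h hsurj).toEquiv.symm
  haveI hfc : Finite C := Finite.of_equiv _ (Subgroup.groupEquivQuotientProdSubgroup (s := h.ker)).symm
  have hcardC : p ∣ Nat.card C := by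
    have h1 : Nat.card C = Nat.card (C ⧸ h.ker) * Nat.card h.ker :=
      (Nat.card_congr Subgroup.groupEquivQuotientProdSubgroup).trans (Nat.card_prod _ _)
    have h2 : Nat.card h.ker = Nat.card g.range := by rw [hex1]
    rw [h1, h2]
    exact Dvd.dvd.mul_left hprange _
  -- elements of p-power order in C lie in the range of g
  have hmemrange : ∀ x : C, (∃ k, x ^ p ^ k = 1) → x ∈ g.range := by
    rintro x ⟨k, hk⟩
    rw [← hex1, MonoidHom.mem_ker]
    have h1 : orderOf (h x) ∣ p ^ k :=
      orderOf_dvd_of_pow_eq_one (by rw [← map_pow, hk, map_one])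
    have h2 : orderOf (h x) ∣ Nat.card (ClassGroup (𝓞 K)) := orderOf_dvd_natCard _
    have hcop : Nat.Coprime (p ^ k) (Nat.card (ClassGroup (𝓞 K))) :=
      Nat.Coprime.pow_left k ((Nat.Prime.coprime_iff_not_dvd hp).mpr hclass)
    exact orderOf_eq_one_iff.mp (Nat.dvd_one.mp (hcop ▸ Nat.dvd_gcd h1 h2))
  -- lifting elements of p-power order
  have hlift : ∀ x : C, (∃ k, x ^ p ^ k = 1) →
      ∃ y : (𝓞 K ⧸ 𝔮 ^ n)ˣ, (∃ j, y ^ p ^ j = 1) ∧ g y = x := by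
    rintro x ⟨k, hk⟩
    obtain ⟨z, hz⟩ := hmemrange x ⟨k, hk⟩
    have hzk : z ^ p ^ k ∈ g.ker := by rw [MonoidHom.mem_ker, map_pow, hz, hk]
    have hw2 : (z ^ p ^ k) ^ 2 = 1 := hker2 _ hzk
    obtain ⟨c, hc⟩ := hodd.pow (n := k)
    refine ⟨z ^ (p ^ k + 1), ⟨k, ?_⟩, ?_⟩
    · rw [← pow_mul, mul_comm, pow_mul]
      rw [show p ^ k + 1 = 2 * (c + 1) by omega, pow_mul, hw2, one_pow]
    · rw [map_pow, hz, pow_succ, hk, one_mul]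
  -- p-subgroups of C are cyclic
  have hTp : IsPGroup p (CommGroup.primaryComponent (𝓞 K ⧸ 𝔮 ^ n)ˣ p) :=
    CommGroup.primaryComponent.isPGroup
  have hTcyc : IsCyclic (CommGroup.primaryComponent (𝓞 K ⧸ 𝔮 ^ n)ˣ p) := hScyc _ hTp
  have hPle : ∀ P : Subgroup C, IsPGroup p P →
      P ≤ (CommGroup.primaryComponent (𝓞 K ⧸ 𝔮 ^ n)ˣ p).map g := by
    intro P hP x hx
    obtain ⟨k, hk⟩ := hP ⟨x, hx⟩
    have hk' : x ^ p ^ k = 1 := by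
      have := congrArg Subtype.val hk
      simpa using this
    obtain ⟨y, ⟨j, hj⟩, hy⟩ := hlift x ⟨k, hk'⟩
    refine ⟨y, ?_, hy⟩
    obtain ⟨i, -, hi⟩ := (Nat.dvd_prime_pow hp).mp (orderOf_dvd_of_pow_eq_one hj)
    exact ⟨i, by rw [← hi]; exact pow_orderOf_eq_one y⟩
  have hcyc : ∀ P : Subgroup C, IsPGroup p P → IsCyclic P := by
    intro P hP
    haveI := isCyclic_map_aux g _ hTcyc
    exact Subgroup.isCyclic_of_le (hPle P hP)
  constructor
  · intro P
    refine ⟨hcyc P P.isPGroup', ?_⟩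
    have hfpos : 0 < (Nat.card C).factorization p :=
      (Nat.Prime.factorization_pos_of_dvd hp Nat.card_pos.ne' hcardC)
    have hlt : 1 < Nat.card P := by
      rw [Sylow.card_eq_multiplicity]
      exact Nat.one_lt_pow hfpos.ne' hp.one_lt
    exact Finite.one_lt_card_iff_nontrivial.mp hlt
  · -- unique subgroup of order p
    set Ω : Subgroup C := (powMonoidHom p : C →* C).ker with hΩ
    have hΩmem : ∀ x : C, x ∈ Ω ↔ x ^ p = 1 := fun x => Iff.rfl
    have hΩp : IsPGroup p Ω := by
      intro x
      refine ⟨1, ?_⟩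
      rw [pow_one]
      exact Subtype.ext (by rw [SubmonoidClass.coe_pow]; exact (hΩmem _).mp x.2)
    haveI hΩcyc := hcyc Ω hΩp
    obtain ⟨y, hy⟩ := hΩcyc.exists_generator
    have hyp : y ^ p = 1 :=
      Subtype.ext (by rw [SubmonoidClass.coe_pow]; exact (hΩmem _).mp y.2)
    have hcardΩ : Nat.card Ω ∣ p := by
      have h1 : Subgroup.zpowers y = (⊤ : Subgroup Ω) := (Subgroup.eq_top_iff' _).mpr hy
      have h2 : Nat.card Ω = orderOf y := by
        rw [← Nat.card_zpowers, h1, Subgroup.card_top]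
      rw [h2]
      exact orderOf_dvd_of_pow_eq_one hyp
    obtain ⟨x, hx⟩ := exists_prime_orderOf_dvd_card' p hcardC
    have hxΩ : Subgroup.zpowers x ≤ Ω :=
      (Subgroup.zpowers_le).mpr ((hΩmem x).mpr (by rw [← hx]; exact pow_orderOf_eq_one x))
    have hple : p ≤ Nat.card Ω := by
      have h1 : Nat.card (Subgroup.zpowers x) = p := by rw [Nat.card_zpowers, hx]
      have h2 := Subgroup.card_le_of_le hxΩ
      omega
    have hΩcard : Nat.card Ω = p :=
      Nat.le_antisymm (Nat.le_of_dvd hp.pos hcardΩ) hple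
    refine ⟨Ω, hΩcard, ?_⟩
    intro H hH
    have hle : H ≤ Ω := by
      intro x hx
      have h1 : (⟨x, hx⟩ : H) ^ p = 1 := by rw [← hH]; exact pow_card_eq_one'
      have h2 := congrArg Subtype.val h1
      rw [SubmonoidClass.coe_pow] at h2
      exact (hΩmem x).mpr h2
    exact Subgroup.eq_of_le_of_card_ge hle (by rw [hΩcard, hH])
end

section
/- Let p be an odd prime and G the pro-p group with presentation ⟨x, y ∣ x^{p^s}[x,y] = 1⟩ for some s ≥ 1. Then G is powerful. -/
/-- The single relator `x^{p^s}[x, y]` (with `[x, y] = x⁻¹y⁻¹xy`), where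
`x = FreeGroup.of true` and `y = FreeGroup.of false`. -/
def demushkinRel (p s : ℕ) : Set (FreeGroup Bool) :=
  { FreeGroup.of true ^ p ^ s *
      ((FreeGroup.of true)⁻¹ * (FreeGroup.of false)⁻¹ * FreeGroup.of true *
        FreeGroup.of false) }

/-- for an odd prime `p` and `s ≥ 1`, the group with presentation
`⟨x, y ∣ x^{p^s}[x, y] = 1⟩` is powerful: its quotient by the subgroup generated by
`p`-th powers is abelian, i.e. all commutators are products of `p`-th powers. -/
theorem presented_demushkin_powerful (p s : ℕ) (hp : p.Prime) (hodd : Odd p)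
    (hs : 1 ≤ s) :
    commutator (PresentedGroup (demushkinRel p s)) ≤
      Subgroup.closure {x : PresentedGroup (demushkinRel p s) |
        ∃ g : PresentedGroup (demushkinRel p s), g ^ p = x} := by
  set G := PresentedGroup (demushkinRel p s) with hG
  set S : Set G := {x | ∃ g : G, g ^ p = x} with hS
  set N : Subgroup G := Subgroup.closure S with hN
  haveI hNnormal : N.Normal := by
    constructor
    intro n hn g
    refine Subgroup.closure_induction (p := fun x _ => g * x * g⁻¹ ∈ N) ?_ ?_ ?_ ?_ hn
    · rintro x ⟨h, rfl⟩
      exact Subgroup.subset_closure ⟨g * h * g⁻¹, by rw [conj_pow]⟩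
    · simpa using Subgroup.one_mem N
    · intro x y _ _ hx hy
      have : g * (x * y) * g⁻¹ = (g * x * g⁻¹) * (g * y * g⁻¹) := by group
      rw [this]; exact Subgroup.mul_mem N hx hy
    · intro x _ hx
      have : g * x⁻¹ * g⁻¹ = (g * x * g⁻¹)⁻¹ := by group
      rw [this]; exact Subgroup.inv_mem N hx
  let π : G →* G ⧸ N := QuotientGroup.mk' N
  have hπsurj : Function.Surjective π := QuotientGroup.mk'_surjective N
  have hp1 : ∀ q : G ⧸ N, q ^ p = 1 := by
    intro q
    obtain ⟨g, rfl⟩ := hπsurj q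
    rw [← map_pow]
    exact (QuotientGroup.eq_one_iff _).2 (Subgroup.subset_closure ⟨g, rfl⟩)
  have hps : ∀ q : G ⧸ N, q ^ p ^ s = 1 := by
    intro q
    obtain ⟨t, rfl⟩ := Nat.exists_eq_add_of_le hs
    rw [pow_add, pow_one, mul_comm, pow_mul]
    exact hp1 _
  -- the relation
  set X : G := PresentedGroup.of true with hX
  set Y : G := PresentedGroup.of false with hY
  have hrel : X ^ p ^ s * (X⁻¹ * Y⁻¹ * X * Y) = 1 := by
    have : (FreeGroup.of true ^ p ^ s *
        ((FreeGroup.of true)⁻¹ * (FreeGroup.of false)⁻¹ * FreeGroup.of true *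
          FreeGroup.of false)) ∈ Subgroup.normalClosure (demushkinRel p s) :=
      Subgroup.subset_normalClosure rfl
    have := PresentedGroup.mk_eq_one_iff.mpr this
    simpa [hX, hY, PresentedGroup.of, map_mul, map_pow, map_inv] using this
  have hrelQ : Commute (π X) (π Y) := by
    have h1 : π X ^ p ^ s * ((π X)⁻¹ * (π Y)⁻¹ * π X * π Y) = 1 := by
      have := congrArg π hrel
      simpa [map_mul, map_pow, map_inv] using this
    rw [hps (π X), one_mul] at h1
    have h2 : π Y * π X * ((π X)⁻¹ * (π Y)⁻¹ * π X * π Y) = π Y * π X := by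
      rw [h1, mul_one]
    exact (by simpa [mul_assoc] using h2 : π X * π Y = π Y * π X)
  -- top is generated by π X, π Y
  have hgen : Subgroup.closure ({π X, π Y} : Set (G ⧸ N)) = ⊤ := by
    have hrange : (Set.range (PresentedGroup.of : Bool → G)) = {X, Y} := by
      ext z
      constructor
      · rintro ⟨b, rfl⟩; cases b <;> simp [hX, hY]
      · rintro (rfl | rfl) <;> [exact ⟨true, rfl⟩; exact ⟨false, rfl⟩]
    have h1 : Subgroup.closure ({X, Y} : Set G) = ⊤ := by
      rw [← hrange]; exact PresentedGroup.closure_range_of _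
    have : Subgroup.map π (Subgroup.closure ({X, Y} : Set G)) = ⊤ := by
      rw [h1]; exact Subgroup.map_top_of_surjective π hπsurj
    rw [MonoidHom.map_closure] at this
    rw [← this]
    congr 1
    simp [Set.image_insert_eq]
  have hcomm : ∀ a b : G ⧸ N, Commute a b := by
    have hcent : ∀ a : G ⧸ N, a ∈ Subgroup.centralizer ({π X, π Y} : Set (G ⧸ N)) := by
      intro a
      have : a ∈ Subgroup.closure ({π X, π Y} : Set (G ⧸ N)) := hgen ▸ Subgroup.mem_top a
      refine (Subgroup.closure_le _).2 ?_ this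
      rintro z (rfl | rfl) <;> rw [SetLike.mem_coe, Subgroup.mem_centralizer_iff] <;>
        rintro g (rfl | rfl) <;>
        first
          | rfl
          | exact hrelQ.symm.eq
          | exact hrelQ.eq
    intro a b
    have hbX : b * π X = π X * b := ((Subgroup.mem_centralizer_iff.1 (hcent b)) (π X) (by simp)).symm
    have hbY : b * π Y = π Y * b := ((Subgroup.mem_centralizer_iff.1 (hcent b)) (π Y) (by simp)).symm
    have hbcen : b ∈ Subgroup.center (G ⧸ N) := by
      rw [Subgroup.mem_center_iff]
      intro g
      have hg : g ∈ Subgroup.closure ({π X, π Y} : Set (G ⧸ N)) := hgen ▸ Subgroup.mem_top g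
      refine Subgroup.closure_induction (p := fun x _ => x * b = b * x) ?_ (by simp) ?_ ?_ hg
      · rintro z (rfl | rfl); exacts [hbX.symm, hbY.symm]
      · intro x y _ _ hx hy
        rw [mul_assoc, hy, ← mul_assoc, hx, mul_assoc]
      · intro x _ hx
        calc x⁻¹ * b = x⁻¹ * b * x * x⁻¹ := by group
        _ = x⁻¹ * (x * b) * x⁻¹ := by rw [mul_assoc x⁻¹ b x, ← hx]
        _ = b * x⁻¹ := by group
    exact (Subgroup.mem_center_iff.1 hbcen) a
  rw [commutator_def, Subgroup.commutator_le]
  intro a _ b _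
  have : π (@Bracket.bracket G G commutatorElement a b) = 1 := by
    rw [map_commutatorElement]
    exact (hcomm (π a) (π b)).commutator_eq
  exact (QuotientGroup.eq_one_iff _).1 this
end
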